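/- arXiv:2103.05243 — 6 statements merged into one kernel-verified Lean document; each statement's English description precedes it below -/
import Mathlib

section
/- Fix training inputs X₁,…,Xₙ ∈ S^{d-1} that are pairwise non-parallel (X_i ∦ X_j for i ≠ j). If the normalized initial weights V₀[j]/‖V₀[j]‖₂, j = 1,…,p, are i.i.d. uniform on S^{d-1}, then the probability that the matrix H has full row rank n tends to 1 as p → ∞. -/
open MeasureTheory ProbabilityTheory Real Matrix
open scoped ENNReal RealInnerProductSpace Classical

noncomputable section

/-- The uniform probability measure on the unit sphere of `ℝ^d`, as a measure on `ℝ^d`. -/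
def unifSphere (d : ℕ) : Measure (EuclideanSpace ℝ (Fin d)) :=
  Measure.map Subtype.val
    ((((volume : Measure (EuclideanSpace ℝ (Fin d))).toSphere Set.univ)⁻¹ •
      (volume : Measure (EuclideanSpace ℝ (Fin d))).toSphere))

/-- The feature row vector `h_{V₀,x}`, whose `j`-th block is `1{xᵀV₀[j]>0}·xᵀ`. -/
def hrow {d p : ℕ} (V : Fin p → EuclideanSpace ℝ (Fin d)) (x : EuclideanSpace ℝ (Fin d)) :
    Fin p × Fin d → ℝ :=
  fun jk => if 0 < ⟪x, V jk.1⟫ then x jk.2 else 0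

/-- The matrix `H` whose `i`-th row is `h_{V₀,X_i}`. -/
def Hmat {d n p : ℕ} (V : Fin p → EuclideanSpace ℝ (Fin d))
    (X : Fin n → EuclideanSpace ℝ (Fin d)) : Matrix (Fin n) (Fin p × Fin d) ℝ :=
  Matrix.of fun i => hrow V (X i)

/-- The learned function `f̂^{ℓ2}(x) = h_{V₀,x} Hᵀ (HHᵀ)⁻¹ y`,
the minimum ℓ₂-norm overfitting solution. -/
def fhat {d n p : ℕ} (V : Fin p → EuclideanSpace ℝ (Fin d))
    (X : Fin n → EuclideanSpace ℝ (Fin d)) (y : Fin n → ℝ)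
    (x : EuclideanSpace ℝ (Fin d)) : ℝ :=
  hrow V x ⬝ᵥ ((Hmat V X)ᵀ *ᵥ ((Hmat V X * (Hmat V X)ᵀ)⁻¹ *ᵥ y))

/-- Normalized direction of a vector. -/
def dir {d : ℕ} (v : EuclideanSpace ℝ (Fin d)) : EuclideanSpace ℝ (Fin d) := ‖v‖⁻¹ • v

/-! ### Auxiliary lemmas -/

section Aux

open Module
open scoped Pointwise

/-- A nontrivial real module is not covered by finitely many kernels of nonzero functionals. -/
lemma exists_avoid {M : Type*} [AddCommGroup M] [Module ℝ M] [Nontrivial M] {ι : Type*}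
    (s : Finset ι) (f : ι → M →ₗ[ℝ] ℝ) (hf : ∀ k ∈ s, f k ≠ 0) :
    ∃ v : M, v ≠ 0 ∧ ∀ k ∈ s, f k v ≠ 0 := by
  classical
  induction s using Finset.induction_on with
  | empty =>
    obtain ⟨v, hv⟩ := exists_ne (0 : M)
    exact ⟨v, hv, by simp⟩
  | @insert a s ha ih =>
    obtain ⟨v, hv0, hvs⟩ := ih (fun k hk => hf k (Finset.mem_insert_of_mem hk))
    have hfa : f a ≠ 0 := hf a (Finset.mem_insert_self a s)
    have : ∃ u, f a u ≠ 0 := by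
      by_contra h
      push_neg at h
      exact hfa (LinearMap.ext fun u => by simp [h u])
    obtain ⟨u, hu⟩ := this
    obtain ⟨t, ht⟩ := Infinite.exists_notMem_finset
      (insert (0:ℝ) ((insert a s).image fun k => -(f k v) / (f k u)))
    have key : ∀ k ∈ insert a s, f k (v + t • u) ≠ 0 := by
      intro k hk h0
      have h0' : f k v + t * f k u = 0 := by simpa [map_add, _root_.map_smul] using h0
      by_cases hku : f k u = 0
      · have hkv : f k v = 0 := by simpa [hku] using h0'
        rcases Finset.mem_insert.1 hk with rfl | hk'
        · exact hu hku
        · exact hvs k hk' hkv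
      · have : t = -(f k v) / (f k u) := by field_simp; linarith
        exact ht (Finset.mem_insert_of_mem (Finset.mem_image.2 ⟨k, hk, this.symm⟩))
    refine ⟨v + t • u, ?_, key⟩
    intro h
    exact key a (Finset.mem_insert_self a s) (by simp [h])

lemma inner_dir {d : ℕ} (x v : EuclideanSpace ℝ (Fin d)) :
    ⟪x, dir v⟫ = ‖v‖⁻¹ * ⟪x, v⟫ := by
  rw [show dir v = ‖v‖⁻¹ • v from rfl, real_inner_smul_right]

lemma dir_pos {d : ℕ} {x v : EuclideanSpace ℝ (Fin d)} (h : 0 < ⟪x, dir v⟫) :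
    0 < ⟪x, v⟫ := by
  rw [inner_dir] at h; by_contra hle; push_neg at hle
  nlinarith [inv_nonneg.2 (norm_nonneg v)]

lemma dir_neg {d : ℕ} {x v : EuclideanSpace ℝ (Fin d)} (h : ⟪x, dir v⟫ < 0) :
    ⟪x, v⟫ < 0 := by
  rw [inner_dir] at h; by_contra hle; push_neg at hle
  nlinarith [inv_nonneg.2 (norm_nonneg v)]

/-- The good region of weight directions: those giving `X i` the activation sign `b` while
keeping the activation pattern of every other `X k` equal to the (nonzero) sign of `⟪X k, v⟫`. -/
def Uset {d n : ℕ} (X : Fin n → EuclideanSpace ℝ (Fin d)) (i : Fin n)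
    (v : EuclideanSpace ℝ (Fin d)) (b : Bool) : Set (EuclideanSpace ℝ (Fin d)) :=
  {w | (if b then 0 < ⟪X i, w⟫ else ⟪X i, w⟫ < 0) ∧ ∀ k, k ≠ i → 0 < ⟪X k, w⟫ * ⟪X k, v⟫}

lemma isOpen_cond {d n : ℕ} (X : Fin n → EuclideanSpace ℝ (Fin d)) (i : Fin n)
    (v : EuclideanSpace ℝ (Fin d)) :
    IsOpen {w : EuclideanSpace ℝ (Fin d) | ∀ k, k ≠ i → 0 < ⟪X k, w⟫ * ⟪X k, v⟫} := by
  have : {w : EuclideanSpace ℝ (Fin d) | ∀ k, k ≠ i → 0 < ⟪X k, w⟫ * ⟪X k, v⟫} =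
      ⋂ k : Fin n, {w | k ≠ i → 0 < ⟪X k, w⟫ * ⟪X k, v⟫} := by
    ext w; simp [Set.mem_iInter]
  rw [this]
  refine isOpen_iInter_of_finite fun k => ?_
  by_cases hk : k = i
  · have : {w : EuclideanSpace ℝ (Fin d) | k ≠ i → 0 < ⟪X k, w⟫ * ⟪X k, v⟫} = Set.univ := by
      ext w; simp [hk]
    rw [this]; exact isOpen_univ
  · have : {w : EuclideanSpace ℝ (Fin d) | k ≠ i → 0 < ⟪X k, w⟫ * ⟪X k, v⟫} =
        {w | 0 < ⟪X k, w⟫ * ⟪X k, v⟫} := by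
      ext w; simp [hk]
    rw [this]
    exact isOpen_lt continuous_const ((continuous_const.inner continuous_id).mul continuous_const)

lemma isOpen_Uset {d n : ℕ} (X : Fin n → EuclideanSpace ℝ (Fin d)) (i : Fin n)
    (v : EuclideanSpace ℝ (Fin d)) (b : Bool) : IsOpen (Uset X i v b) := by
  have : Uset X i v b = {w : EuclideanSpace ℝ (Fin d) |
      (if b then 0 < ⟪X i, w⟫ else ⟪X i, w⟫ < 0)} ∩
      {w | ∀ k, k ≠ i → 0 < ⟪X k, w⟫ * ⟪X k, v⟫} := rfl
  rw [this]
  refine IsOpen.inter ?_ (isOpen_cond X i v)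
  cases b
  · simpa using isOpen_lt (continuous_const.inner continuous_id) continuous_const
  · simpa using isOpen_lt continuous_const (continuous_const.inner continuous_id)

lemma exists_sphere_mem_Uset {d n : ℕ} (X : Fin n → EuclideanSpace ℝ (Fin d)) (i : Fin n)
    (hXi : ‖X i‖ = 1) (v : EuclideanSpace ℝ (Fin d)) (hvi : ⟪X i, v⟫ = 0)
    (hv : ∀ k, k ≠ i → ⟪X k, v⟫ ≠ 0) (b : Bool) :
    ∃ w, ‖w‖ = 1 ∧ w ∈ Uset X i v b := by
  have hS'open := isOpen_cond X i v
  have hvS' : v ∈ {w : EuclideanSpace ℝ (Fin d) | ∀ k, k ≠ i → 0 < ⟪X k, w⟫ * ⟪X k, v⟫} :=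
    fun k hk => mul_self_pos.2 (hv k hk)
  have hc : Continuous (fun t : ℝ => v + t • X i) :=
    continuous_const.add (continuous_id.smul continuous_const)
  have hnh : (fun t : ℝ => v + t • X i) ⁻¹'
      {w | ∀ k, k ≠ i → 0 < ⟪X k, w⟫ * ⟪X k, v⟫} ∈ nhds (0:ℝ) :=
    hc.continuousAt.preimage_mem_nhds (hS'open.mem_nhds (by simpa using hvS'))
  obtain ⟨ε, hε, hball⟩ := Metric.mem_nhds_iff.1 hnh
  obtain ⟨t, ht0, htball, htb⟩ :
      ∃ t : ℝ, t ≠ 0 ∧ t ∈ Metric.ball (0:ℝ) ε ∧ (if b then 0 < t else t < 0) := by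
    cases b
    · refine ⟨-(ε/2), by linarith, ?_, by simp; linarith⟩
      simp only [Metric.mem_ball, Real.dist_eq, sub_zero]
      rw [abs_of_neg (by linarith)]; linarith
    · refine ⟨ε/2, by linarith, ?_, by simp; linarith⟩
      simp only [Metric.mem_ball, Real.dist_eq, sub_zero]
      rw [abs_of_pos (by linarith)]; linarith
  set u : EuclideanSpace ℝ (Fin d) := v + t • X i with hud
  have hus : u ∈ {w : EuclideanSpace ℝ (Fin d) | ∀ k, k ≠ i → 0 < ⟪X k, w⟫ * ⟪X k, v⟫} :=
    hball htball
  have hXiu : ⟪X i, u⟫ = t := by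
    rw [hud, inner_add_right, real_inner_smul_right, hvi, real_inner_self_eq_norm_mul_norm, hXi]
    ring
  have hu0 : u ≠ 0 := by
    intro h
    rw [h, inner_zero_right] at hXiu
    exact ht0 hXiu.symm
  have hnu : (0:ℝ) < ‖u‖ := norm_pos_iff.2 hu0
  have hinner : ⟪X i, ‖u‖⁻¹ • u⟫ = ‖u‖⁻¹ * t := by rw [real_inner_smul_right, hXiu]
  refine ⟨‖u‖⁻¹ • u, ?_, ?_, ?_⟩
  · rw [norm_smul, norm_inv, norm_norm, inv_mul_cancel₀ hnu.ne']
  · split_ifs with hb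
    · rw [hb] at htb; simp only [if_true] at htb
      rw [hinner]
      exact mul_pos (inv_pos.2 hnu) htb
    · simp only [Bool.not_eq_true] at hb
      rw [hb] at htb; simp only [Bool.false_eq_true, if_false] at htb
      rw [hinner]
      exact mul_neg_of_pos_of_neg (inv_pos.2 hnu) htb
  · intro k hk
    have h1 : 0 < ⟪X k, u⟫ * ⟪X k, v⟫ := hus k hk
    rw [real_inner_smul_right, mul_assoc]
    exact mul_pos (inv_pos.2 hnu) h1

/-- The uniform measure on the sphere gives positive mass to any open set meeting the sphere. -/
lemma unifSphere_pos {d : ℕ} (hd : 0 < d) {U : Set (EuclideanSpace ℝ (Fin d))}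
    (hU : IsOpen U) {x : EuclideanSpace ℝ (Fin d)} (hx : x ∈ U) (hxn : ‖x‖ = 1) :
    0 < unifSphere d U := by
  set T : Set (EuclideanSpace ℝ (Fin d)) :=
    (fun z : EuclideanSpace ℝ (Fin d) => ‖z‖) ⁻¹' (Set.Ioo (0:ℝ) 1) ∩
    (fun z : EuclideanSpace ℝ (Fin d) => ‖z‖⁻¹ • z) ⁻¹' U with hTdef
  have hTopen : IsOpen T := by
    rw [isOpen_iff_mem_nhds]
    intro y hy
    have hy1 : (0:ℝ) < ‖y‖ := hy.1.1
    have h1 : (fun z : EuclideanSpace ℝ (Fin d) => ‖z‖) ⁻¹' (Set.Ioo (0:ℝ) 1) ∈ nhds y :=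
      continuous_norm.continuousAt.preimage_mem_nhds (isOpen_Ioo.mem_nhds hy.1)
    have hca : ContinuousAt (fun z : EuclideanSpace ℝ (Fin d) => ‖z‖⁻¹ • z) y :=
      ((continuous_norm.continuousAt).inv₀ hy1.ne').smul continuousAt_id
    have h2 : (fun z : EuclideanSpace ℝ (Fin d) => ‖z‖⁻¹ • z) ⁻¹' U ∈ nhds y :=
      hca.preimage_mem_nhds (hU.mem_nhds hy.2)
    exact Filter.inter_mem h1 h2
  have hTne : (2⁻¹ : ℝ) • x ∈ T := by
    have hns : ‖(2⁻¹ : ℝ) • x‖ = 2⁻¹ := by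
      rw [norm_smul, hxn, mul_one]; norm_num
    constructor
    · simp only [Set.mem_preimage, hns, Set.mem_Ioo]; norm_num
    · simp only [Set.mem_preimage, hns]
      rw [smul_smul]
      norm_num
      exact hx
  have hT : 0 < volume T := hTopen.measure_pos volume ⟨_, hTne⟩
  have key : Set.Ioo (0:ℝ) 1 • (Subtype.val ''
      (Subtype.val ⁻¹' U : Set (Metric.sphere (0 : EuclideanSpace ℝ (Fin d)) 1))) = T := by
    ext y
    rw [Set.mem_smul]
    constructor
    · rintro ⟨r, hr, u, hu, rfl⟩
      obtain ⟨u', hu'⟩ := hu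
      have hun : ‖u‖ = 1 := by
        rw [← hu'.2]
        exact mem_sphere_zero_iff_norm.1 u'.2
      have hnru : ‖r • u‖ = r := by
        rw [norm_smul, hun, mul_one, Real.norm_eq_abs, abs_of_pos hr.1]
      constructor
      · simp only [Set.mem_preimage, hnru, Set.mem_Ioo]; exact hr
      · simp only [Set.mem_preimage, hnru]
        rw [smul_smul, inv_mul_cancel₀ hr.1.ne', one_smul]
        rw [← hu'.2]
        exact hu'.1
    · intro hy
      have hy1 : (0:ℝ) < ‖y‖ := hy.1.1
      refine ⟨‖y‖, hy.1, ‖y‖⁻¹ • y, ⟨⟨‖y‖⁻¹ • y, ?_⟩, ?_⟩, ?_⟩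
      · rw [mem_sphere_zero_iff_norm, norm_smul, norm_inv, norm_norm,
          inv_mul_cancel₀ hy1.ne']
      · exact ⟨hy.2, rfl⟩
      · rw [smul_smul, mul_inv_cancel₀ hy1.ne', one_smul]
  have hms : MeasurableSet U := hU.measurableSet
  rw [unifSphere, Measure.map_apply measurable_subtype_coe hms, Measure.smul_apply, smul_eq_mul]
  refine ENNReal.mul_pos (ENNReal.inv_ne_zero.2 (measure_ne_top _ _)) ?_
  rw [Measure.toSphere_apply' _ (hms.preimage measurable_subtype_coe), key]
  refine mul_ne_zero ?_ hT.ne'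
  simp only [ne_eq, Nat.cast_eq_zero]
  rw [finrank_euclideanSpace_fin]
  omega

/-- Existence of a direction orthogonal to `X i` but not orthogonal to any other `X k`. -/
lemma exists_sep {d n : ℕ} (hd2 : 2 ≤ d) (X : Fin n → EuclideanSpace ℝ (Fin d))
    (hXn : ∀ i, ‖X i‖ = 1) (hXpar : ∀ i j, i ≠ j → ∀ c : ℝ, X i ≠ c • X j) (i : Fin n) :
    ∃ v : EuclideanSpace ℝ (Fin d), ⟪X i, v⟫ = 0 ∧ ∀ k, k ≠ i → ⟪X k, v⟫ ≠ 0 := by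
  have hXi0 : X i ≠ 0 := by
    intro h
    have := hXn i
    rw [h, norm_zero] at this
    exact one_ne_zero this.symm
  set W : Submodule ℝ (EuclideanSpace ℝ (Fin d)) := (ℝ ∙ (X i))ᗮ with hWdef
  have h1 : finrank ℝ (ℝ ∙ (X i)) = 1 := finrank_span_singleton hXi0
  have hsum := Submodule.finrank_add_finrank_orthogonal (𝕜 := ℝ) (ℝ ∙ (X i))
  have hEd : finrank ℝ (EuclideanSpace ℝ (Fin d)) = d := finrank_euclideanSpace_fin
  have hWpos : 0 < finrank ℝ W := by
    rw [h1, hEd] at hsum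
    rw [hWdef]
    omega
  haveI : Nontrivial W := Module.nontrivial_of_finrank_pos hWpos
  set f : Fin n → W →ₗ[ℝ] ℝ :=
    fun k => ((innerSL ℝ (X k)).toLinearMap).comp W.subtype with hfdef
  have hfne : ∀ k ∈ Finset.univ.erase i, f k ≠ 0 := by
    intro k hk h0
    have hki : k ≠ i := Finset.ne_of_mem_erase hk
    have hmem : X k ∈ Wᗮ := by
      rw [Submodule.mem_orthogonal]
      intro u hu
      have h := LinearMap.congr_fun h0 ⟨u, hu⟩
      simp only [hfdef, LinearMap.comp_apply, Submodule.coe_subtype,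
        ContinuousLinearMap.coe_coe, innerSL_apply_apply, LinearMap.zero_apply] at h
      rw [real_inner_comm]
      exact h
    rw [hWdef, Submodule.orthogonal_orthogonal] at hmem
    obtain ⟨c, hc⟩ := Submodule.mem_span_singleton.1 hmem
    exact hXpar k i hki c hc.symm
  obtain ⟨w, hw0, hwne⟩ := exists_avoid (Finset.univ.erase i) f hfne
  refine ⟨(w : EuclideanSpace ℝ (Fin d)), ?_, ?_⟩
  · exact (Submodule.mem_orthogonal (ℝ ∙ (X i)) (w : EuclideanSpace ℝ (Fin d))).1 w.2
      (X i) (Submodule.mem_span_singleton_self _)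
  · intro k hk
    have h := hwne k (Finset.mem_erase.2 ⟨hk, Finset.mem_univ k⟩)
    simpa [hfdef] using h

/-- If for each row index `i` and each sign there is a weight whose direction lies in the
corresponding good region, then `H` has full row rank. -/
lemma rank_Hmat_of_good {d n p : ℕ} (X : Fin n → EuclideanSpace ℝ (Fin d))
    (hXn : ∀ i, ‖X i‖ = 1) (v : Fin n → EuclideanSpace ℝ (Fin d))
    (V : Fin p → EuclideanSpace ℝ (Fin d))
    (hhit : ∀ (i : Fin n) (b : Bool), ∃ j : Fin p, dir (V j) ∈ Uset X i (v i) b) :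
    (Hmat V X).rank = n := by
  have li : LinearIndependent ℝ (fun i : Fin n => (Hmat V X) i) := by
    rw [Fintype.linearIndependent_iff]
    intro g hg i
    obtain ⟨jp, hjp⟩ := hhit i true
    obtain ⟨jm, hjm⟩ := hhit i false
    have hip : 0 < ⟪X i, V jp⟫ := dir_pos (by simpa using hjp.1)
    have him : ¬ (0 < ⟪X i, V jm⟫) := by
      have : ⟪X i, V jm⟫ < 0 := dir_neg (by simpa using hjm.1)
      linarith
    have keysign : ∀ (u : EuclideanSpace ℝ (Fin d)) (k : Fin n),
        0 < ⟪X k, dir u⟫ * ⟪X k, v i⟫ → ((0 < ⟪X k, u⟫) ↔ (0 < ⟪X k, v i⟫)) := by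
      intro u k h
      rcases mul_pos_iff.1 h with ⟨h1, h2⟩ | ⟨h1, h2⟩
      · exact iff_of_true (dir_pos h1) h2
      · exact iff_of_false (fun hpos => absurd (dir_neg h1) (by linarith)) (by linarith)
    have hind : ∀ k, k ≠ i → ((0 < ⟪X k, V jp⟫) ↔ (0 < ⟪X k, V jm⟫)) :=
      fun k hk => (keysign (V jp) k (hjp.2 k hk)).trans (keysign (V jm) k (hjm.2 k hk)).symm
    have key : ∀ m : Fin d, g i * X i m = 0 := by
      intro m
      have ep : ∑ k, g k * (if 0 < ⟪X k, V jp⟫ then X k m else 0) = 0 := by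
        have := congrFun hg (jp, m)
        simpa [Hmat, hrow, Finset.sum_apply] using this
      have em : ∑ k, g k * (if 0 < ⟪X k, V jm⟫ then X k m else 0) = 0 := by
        have := congrFun hg (jm, m)
        simpa [Hmat, hrow, Finset.sum_apply] using this
      have hsub : ∑ k, (g k * (if 0 < ⟪X k, V jp⟫ then X k m else 0)
          - g k * (if 0 < ⟪X k, V jm⟫ then X k m else 0)) = 0 := by
        rw [Finset.sum_sub_distrib, ep, em, sub_zero]
      rw [Finset.sum_eq_single i] at hsub
      · rw [if_pos hip, if_neg him] at hsub
        simpa using hsub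
      · intro k _ hk
        rw [if_congr (hind k hk) rfl rfl]
        ring
      · intro h
        exact absurd (Finset.mem_univ i) h
    by_contra hgi
    have hXi0 : X i = 0 := by
      ext m
      have := key m
      rcases mul_eq_zero.1 this with h | h
      · exact absurd h hgi
      · exact h
    have := hXn i
    rw [hXi0, norm_zero] at this
    exact one_ne_zero this.symm
  rw [← Matrix.rank_transpose, Matrix.rank_eq_finrank_span_cols, Matrix.col, Matrix.transpose_transpose,
    finrank_span_eq_card li, Fintype.card_fin]

end Aux

/-- **Lemma (full row rank)**: for fixed pairwise non-parallel training inputs on the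
sphere and i.i.d. uniformly distributed directions of the initial weights, the probability
that `H` has full row rank `n` tends to `1` as `p → ∞`. -/
theorem Hmat_full_rank_in_probability
    (d n : ℕ) (hd2 : 2 ≤ d)
    (X : Fin n → EuclideanSpace ℝ (Fin d))
    (hX : ∀ i, X i ∈ Metric.sphere (0 : EuclideanSpace ℝ (Fin d)) 1)
    (hXpar : ∀ i j, i ≠ j → ∀ c : ℝ, X i ≠ c • X j)
    {Ω : Type*} [MeasureSpace Ω] [IsProbabilityMeasure (ℙ : Measure Ω)]
    (V : ℕ → Ω → EuclideanSpace ℝ (Fin d))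
    (hVmeas : ∀ j, Measurable (V j))
    (hindep : iIndepFun (fun j ω => dir (V j ω)) ℙ)
    (hVdist : ∀ j, Measure.map (fun ω => dir (V j ω)) ℙ = unifSphere d) :
    Filter.Tendsto
      (fun p : ℕ => ℙ {ω | (Hmat (fun j : Fin p => V j ω) X).rank = n})
      Filter.atTop (nhds 1) := by
  classical
  have hXn : ∀ i, ‖X i‖ = 1 := fun i => mem_sphere_zero_iff_norm.1 (hX i)
  have hd0 : 0 < d := by omega
  choose v hv1 hv2 using fun i => exists_sep hd2 X hXn hXpar i
  have hWmeas : ∀ j : ℕ, Measurable (fun ω => dir (V j ω)) := by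
    intro j
    show Measurable fun ω => ‖V j ω‖⁻¹ • V j ω
    exact ((hVmeas j).norm.inv).smul (hVmeas j)
  set q : Fin n → Bool → ℝ≥0∞ := fun i b => unifSphere d (Uset X i (v i) b) with hqdef
  have hUopen : ∀ i b, IsOpen (Uset X i (v i) b) := fun i b => isOpen_Uset X i (v i) b
  have hq : ∀ i b, 0 < q i b := by
    intro i b
    obtain ⟨w, hw1, hw2⟩ := exists_sphere_mem_Uset X i (hXn i) (v i) (hv1 i) (hv2 i) b
    exact unifSphere_pos hd0 (hUopen i b) hw2 hw1
  have hprob : ∀ (j : ℕ) (i : Fin n) (b : Bool),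
      ℙ ((fun ω => dir (V j ω)) ⁻¹' (Uset X i (v i) b)) = q i b := by
    intro j i b
    simp only [hqdef]
    rw [← hVdist j, Measure.map_apply (hWmeas j) (hUopen i b).measurableSet]
  set Bad : Fin n → Bool → ℕ → Set Ω :=
    fun i b p => ⋂ j ∈ Finset.range p,
      (fun ω => dir (V j ω)) ⁻¹' (Uset X i (v i) b)ᶜ with hBaddef
  have hBadmeas : ∀ i b p, MeasurableSet (Bad i b p) := fun i b p =>
    MeasurableSet.biInter (Finset.range p).countable_toSet
      (fun j _ => (hWmeas j) (hUopen i b).measurableSet.compl)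
  have hBadprob : ∀ i b p, ℙ (Bad i b p) = (1 - q i b) ^ p := by
    intro i b p
    have h := hindep.measure_inter_preimage_eq_mul (Finset.range p)
      (sets := fun _ => (Uset X i (v i) b)ᶜ)
      (fun j _ => (hUopen i b).measurableSet.compl)
    calc ℙ (Bad i b p)
        = ∏ j ∈ Finset.range p,
            ℙ ((fun ω => dir (V j ω)) ⁻¹' (Uset X i (v i) b)ᶜ) := by
          simp only [hBaddef]; exact h
      _ = ∏ _j ∈ Finset.range p, (1 - q i b) := by
          refine Finset.prod_congr rfl fun j _ => ?_
          rw [Set.preimage_compl,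
            prob_compl_eq_one_sub ((hUopen i b).measurableSet.preimage (hWmeas j)), hprob]
      _ = (1 - q i b) ^ p := by rw [Finset.prod_const, Finset.card_range]
  set BadU : ℕ → Set Ω := fun p => ⋃ i : Fin n, ⋃ b : Bool, Bad i b p with hBadUdef
  have hBadUmeas : ∀ p, MeasurableSet (BadU p) := fun p =>
    MeasurableSet.iUnion fun i => MeasurableSet.iUnion fun b => hBadmeas i b p
  have hBadUle : ∀ p, ℙ (BadU p) ≤ ∑ i : Fin n, ∑ b : Bool, (1 - q i b) ^ p := by
    intro p
    calc ℙ (BadU p) ≤ ∑' i : Fin n, ℙ (⋃ b : Bool, Bad i b p) := measure_iUnion_le _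
      _ ≤ ∑' i : Fin n, ∑' b : Bool, ℙ (Bad i b p) :=
          ENNReal.tsum_le_tsum fun i => measure_iUnion_le _
      _ = ∑ i : Fin n, ∑ b : Bool, ℙ (Bad i b p) := by
          rw [tsum_fintype]; exact Finset.sum_congr rfl fun i _ => tsum_fintype _
      _ = ∑ i : Fin n, ∑ b : Bool, (1 - q i b) ^ p :=
          Finset.sum_congr rfl fun i _ => Finset.sum_congr rfl fun b _ => hBadprob i b p
  have hsum0 : Filter.Tendsto (fun p : ℕ => ∑ i : Fin n, ∑ b : Bool, (1 - q i b) ^ p)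
      Filter.atTop (nhds 0) := by
    have h0 : (0 : ℝ≥0∞) = ∑ _i : Fin n, ∑ _b : Bool, (0:ℝ≥0∞) := by simp
    rw [h0]
    refine tendsto_finset_sum _ fun i _ => tendsto_finset_sum _ fun b _ => ?_
    exact ENNReal.tendsto_pow_atTop_nhds_zero_of_lt_one
      (ENNReal.sub_lt_self ENNReal.one_ne_top one_ne_zero (hq i b).ne')
  have hBadU0 : Filter.Tendsto (fun p => ℙ (BadU p)) Filter.atTop (nhds 0) :=
    tendsto_of_tendsto_of_tendsto_of_le_of_le tendsto_const_nhds hsum0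
      (fun p => zero_le) hBadUle
  have hGood : ∀ p : ℕ, (BadU p)ᶜ ⊆ {ω | (Hmat (fun j : Fin p => V j ω) X).rank = n} := by
    intro p ω hω
    simp only [hBadUdef, Set.mem_compl_iff, Set.mem_iUnion, not_exists] at hω
    refine rank_Hmat_of_good X hXn v _ ?_
    intro i b
    have h := hω i b
    simp only [hBaddef, Set.mem_iInter, Set.mem_preimage, Set.mem_compl_iff, Finset.mem_range,
      not_forall] at h
    obtain ⟨j, hj, hmem⟩ := h
    exact ⟨⟨j, hj⟩, not_not.1 hmem⟩
  have h1 : ∀ p : ℕ, 1 - ℙ (BadU p) ≤ ℙ {ω | (Hmat (fun j : Fin p => V j ω) X).rank = n} := by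
    intro p
    calc 1 - ℙ (BadU p) = ℙ ((BadU p)ᶜ) := (prob_compl_eq_one_sub (hBadUmeas p)).symm
      _ ≤ _ := measure_mono (hGood p)
  have hlim : Filter.Tendsto (fun p : ℕ => 1 - ℙ (BadU p)) Filter.atTop (nhds 1) := by
    have := ENNReal.Tendsto.sub
      (tendsto_const_nhds :
        Filter.Tendsto (fun _ : ℕ => (1:ℝ≥0∞)) Filter.atTop (nhds 1)) hBadU0
      (Or.inl ENNReal.one_ne_top)
    simpa using this
  exact tendsto_of_tendsto_of_tendsto_of_le_of_le hlim tendsto_const_nhds h1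
    (fun p => prob_le_one)

end
end

section
/- Let H ∈ ℝ^{n×dp} and y ∈ ℝⁿ with HHᵀ invertible. Consider the gradient-descent iterates ΔV_0 = 0 and ΔV_{k+1} = ΔV_k − γ_k·Σ_{i=1}^n (H_i·ΔV_k − y_i)·H_iᵀ, where H_i denotes the i-th row of H and γ_k ∈ ℝ are arbitrary step sizes. If the iterates converge to a limit ΔV_∞ satisfying H·ΔV_∞ = y, then ΔV_∞ = Hᵀ·(HHᵀ)⁻¹·y, i.e., gradient descent converges to the minimum-ℓ₂-norm interpolating solution. -/
open Matrix

/-- **Lemma (gradient descent converges to the minimum ℓ₂-norm solution)**: if the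
gradient-descent iterates `ΔV_0 = 0`,
`ΔV_{k+1} = ΔV_k − γ_k·Σ_i (H_i·ΔV_k − y_i)·H_iᵀ` converge to a limit interpolating the
data (`H·ΔV_∞ = y`), then the limit is `Hᵀ(HHᵀ)⁻¹y`. -/
theorem gradient_descent_limit_eq_min_norm_solution
    {n : ℕ} {m : Type*} [Fintype m]
    (H : Matrix (Fin n) m ℝ) (y : Fin n → ℝ)
    (hinv : IsUnit (H * Hᵀ).det)
    (γ : ℕ → ℝ) (ΔV : ℕ → m → ℝ)
    (h0 : ΔV 0 = 0)
    (hstep : ∀ k, ΔV (k + 1) =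
      ΔV k - γ k • ∑ i : Fin n, ((H *ᵥ ΔV k) i - y i) • (fun j => H i j))
    (L : m → ℝ)
    (hconv : Filter.Tendsto ΔV Filter.atTop (nhds L))
    (hinterp : H *ᵥ L = y) :
    L = Hᵀ *ᵥ ((H * Hᵀ)⁻¹ *ᵥ y) := by
  set S : Submodule ℝ (m → ℝ) := LinearMap.range (Hᵀ.mulVecLin) with hS
  have hrow : ∀ i : Fin n, (fun j => H i j) ∈ S := by
    intro i
    exact ⟨Pi.single i 1, by
      ext j; simp [Matrix.mulVec_single, Matrix.transpose_apply]⟩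
  have hmem : ∀ k, ΔV k ∈ S := by
    intro k
    induction k with
    | zero => rw [h0]; exact S.zero_mem
    | succ k ih =>
      rw [hstep k]
      exact S.sub_mem ih (S.smul_mem _ (S.sum_mem fun i _ => S.smul_mem _ (hrow i)))
  have hclosed : IsClosed (S : Set (m → ℝ)) := S.closed_of_finiteDimensional
  have hLmem : L ∈ S := hclosed.mem_of_tendsto hconv (Filter.Eventually.of_forall hmem)
  obtain ⟨c, hc⟩ := hLmem
  have hc' : Hᵀ *ᵥ c = L := hc
  have h1 : (H * Hᵀ) *ᵥ c = y := by
    rw [← Matrix.mulVec_mulVec, hc', hinterp]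
  have h2 : c = (H * Hᵀ)⁻¹ *ᵥ y := by
    rw [← h1, Matrix.mulVec_mulVec, Matrix.nonsing_inv_mul _ hinv, Matrix.one_mulVec]
  rw [← hc', h2]
end

section
/- For every integer d ≥ 2, the Beta value B((d−1)/2, 1/2) lies in the interval [1/√d, π]. Moreover, if d ≥ 5, then B((d−1)/2, 1/2) lies in the interval [1/√d, 4/√(d−3)]. -/
open Real

noncomputable section

/-- The Beta function `B(a,b) = ∫₀¹ t^{a−1}(1−t)^{b−1} dt`. -/
def Beta (a b : ℝ) : ℝ := ∫ t in (0 : ℝ)..1, t ^ (a - 1) * (1 - t) ^ (b - 1)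

lemma beta_eqOn (a b : ℝ) :
    Set.EqOn (fun t : ℝ => ((t : ℂ) ^ ((a : ℂ) - 1) * ((1 : ℂ) - t) ^ ((b : ℂ) - 1)))
      (fun t : ℝ => ((t ^ (a - 1) * (1 - t) ^ (b - 1) : ℝ) : ℂ)) (Set.Icc 0 1) := by
  intro t ht
  simp only [Set.mem_Icc] at ht
  have h1 : ((a : ℂ) - 1) = ((a - 1 : ℝ) : ℂ) := by push_cast; ring
  have h2 : ((b : ℂ) - 1) = ((b - 1 : ℝ) : ℂ) := by push_cast; ring
  have h3 : ((1 : ℂ) - (t : ℂ)) = ((1 - t : ℝ) : ℂ) := by push_cast; ring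
  simp only [h1, h2, h3]
  rw [← Complex.ofReal_cpow ht.1, ← Complex.ofReal_cpow (by linarith : (0:ℝ) ≤ 1 - t)]
  push_cast
  ring

lemma beta_eq_betaIntegral {a b : ℝ} (ha : 0 < a) (hb : 0 < b) :
    (Beta a b : ℂ) = Complex.betaIntegral a b := by
  rw [Beta, Complex.betaIntegral, ← intervalIntegral.integral_ofReal]
  exact intervalIntegral.integral_congr (fun t ht => by
    rw [Set.uIcc_of_le (by norm_num : (0:ℝ) ≤ 1)] at ht
    exact (beta_eqOn a b ht).symm)

lemma beta_eq_gamma {a b : ℝ} (ha : 0 < a) (hb : 0 < b) :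
    Beta a b = Real.Gamma a * Real.Gamma b / Real.Gamma (a + b) := by
  have hab : Real.Gamma (a + b) ≠ 0 := (Real.Gamma_pos_of_pos (by linarith)).ne'
  have := Complex.Gamma_mul_Gamma_eq_betaIntegral
    (s := (a : ℂ)) (t := (b : ℂ)) (by simpa using ha) (by simpa using hb)
  rw [← beta_eq_betaIntegral ha hb] at this
  have h2 : ((Real.Gamma a * Real.Gamma b : ℝ) : ℂ)
      = ((Real.Gamma (a + b) * Beta a b : ℝ) : ℂ) := by
    push_cast
    rw [Complex.Gamma_ofReal, Complex.Gamma_ofReal, ← Complex.ofReal_add,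
      Complex.Gamma_ofReal] at this
    exact this
  have h3 := Complex.ofReal_injective h2
  field_simp
  linarith [h3]

lemma beta_integrable {a b : ℝ} (ha : 0 < a) (hb : 0 < b) :
    IntervalIntegrable (fun t : ℝ => t ^ (a - 1) * (1 - t) ^ (b - 1))
      MeasureTheory.volume 0 1 := by
  have hc := Complex.betaIntegral_convergent (u := (a : ℂ)) (v := (b : ℂ))
    (by simpa using ha) (by simpa using hb)
  have hre : IntervalIntegrable
      (fun t : ℝ => (((t : ℂ) ^ ((a : ℂ) - 1) * ((1 : ℂ) - t) ^ ((b : ℂ) - 1)).re))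
      MeasureTheory.volume 0 1 := ⟨hc.1.re, hc.2.re⟩
  refine hre.congr ?_
  have h0 : ∀ᵐ t ∂(MeasureTheory.volume.restrict (Set.uIoc (0:ℝ) 1)),
      t ∈ Set.uIoc (0:ℝ) 1 := MeasureTheory.ae_restrict_mem measurableSet_uIoc
  intro t ht
  beta_reduce
  rw [Set.uIoc_of_le (by norm_num : (0:ℝ) ≤ 1)] at ht
  have := beta_eqOn a b (Set.mem_Icc.2 ⟨le_of_lt ht.1, ht.2⟩)
  simp only at this
  rw [this]
  simp

lemma beta_anti {x y : ℝ} (hx : 0 < x) (hxy : x ≤ y) :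
    Beta y (1/2) ≤ Beta x (1/2) := by
  refine intervalIntegral.integral_mono_ae_restrict (by norm_num)
    (beta_integrable (by linarith) (by norm_num))
    (beta_integrable (by linarith) (by norm_num)) ?_
  have h0 : ∀ᵐ t ∂(MeasureTheory.volume.restrict (Set.Icc (0:ℝ) 1)), t ≠ 0 := by
    refine MeasureTheory.ae_mono MeasureTheory.Measure.restrict_le_self ?_
    have := Real.volume_singleton (a := (0:ℝ))
    rw [MeasureTheory.mem_ae_iff]
    convert this using 2
    ext t
    simp
  have h1 : ∀ᵐ t ∂(MeasureTheory.volume.restrict (Set.Icc (0:ℝ) 1)),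
      t ∈ Set.Icc (0:ℝ) 1 := MeasureTheory.ae_restrict_mem measurableSet_Icc
  filter_upwards [h0, h1] with t ht0 ht
  have htpos : 0 < t := lt_of_le_of_ne ht.1 (Ne.symm ht0)
  have key : t ^ (y - 1) ≤ t ^ (x - 1) :=
    Real.rpow_le_rpow_of_exponent_ge htpos ht.2 (by linarith)
  have hnn : (0:ℝ) ≤ (1 - t) ^ ((1:ℝ)/2 - 1) := Real.rpow_nonneg (by linarith [ht.2]) _
  exact mul_le_mul_of_nonneg_right key hnn

lemma beta_pos {x : ℝ} (hx : 0 < x) : 0 < Beta x (1/2) := by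
  rw [beta_eq_gamma hx (by norm_num)]
  exact div_pos (mul_pos (Real.Gamma_pos_of_pos hx) (Real.Gamma_pos_of_pos (by norm_num)))
    (Real.Gamma_pos_of_pos (by linarith))

lemma beta_funeq {x : ℝ} (hx : 0 < x) :
    Beta x (1/2) * Beta (x + 1/2) (1/2) = π / x := by
  rw [beta_eq_gamma hx (by norm_num), beta_eq_gamma (by linarith) (by norm_num)]
  have h1 : x + 1/2 + 1/2 = x + 1 := by ring
  rw [h1, Real.Gamma_add_one hx.ne', Real.Gamma_one_half_eq]
  have hg1 : 0 < Real.Gamma x := Real.Gamma_pos_of_pos hx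
  have hg2 : 0 < Real.Gamma (x + 1/2) := Real.Gamma_pos_of_pos (by linarith)
  have hπ : Real.sqrt π * Real.sqrt π = π := Real.mul_self_sqrt Real.pi_pos.le
  field_simp
  ring_nf
  rw [Real.sq_sqrt Real.pi_pos.le]

/-- **Lemma (bounds on `B((d−1)/2, 1/2)`)**: for every `d ≥ 2`,
`B((d−1)/2,1/2) ∈ [1/√d, π]`, and for `d ≥ 5`, `B((d−1)/2,1/2) ∈ [1/√d, 4/√(d−3)]`. -/
theorem beta_bounds (d : ℕ) (hd2 : 2 ≤ d) :
    Beta (((d : ℝ) - 1) / 2) (1 / 2) ∈ Set.Icc (1 / Real.sqrt d) π ∧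
      (5 ≤ d →
        Beta (((d : ℝ) - 1) / 2) (1 / 2) ∈
          Set.Icc (1 / Real.sqrt d) (4 / Real.sqrt ((d : ℝ) - 3))) := by
  have hd2' : (2:ℝ) ≤ d := by exact_mod_cast hd2
  set x : ℝ := ((d : ℝ) - 1) / 2 with hxdef
  have hx : 0 < x := by simp only [hxdef]; linarith
  set B := Beta x (1/2) with hBdef
  have hBpos : 0 < B := beta_pos hx
  -- lower bound: π / x ≤ B ^ 2
  have hlow : π / x ≤ B ^ 2 := by
    have h1 : Beta (x + 1/2) (1/2) ≤ B := beta_anti hx (by linarith)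
    have h2 := beta_funeq hx
    nlinarith [beta_pos (show (0:ℝ) < x + 1/2 by linarith)]
  have hd0 : (0:ℝ) < d := by linarith
  have hlower : 1 / Real.sqrt d ≤ B := by
    have h3 : (1:ℝ) / d ≤ B ^ 2 := by
      have : (1:ℝ) / d ≤ π / x := by
        rw [div_le_div_iff₀ hd0 hx]
        nlinarith [Real.pi_gt_three]
      linarith
    have h4 : Real.sqrt (1 / d) ≤ Real.sqrt (B ^ 2) := Real.sqrt_le_sqrt h3
    rwa [Real.sqrt_sq hBpos.le, one_div, Real.sqrt_inv, ← one_div] at h4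
  constructor
  · refine ⟨hlower, ?_⟩
    rcases eq_or_lt_of_le hd2' with h2 | h3
    · -- d = 2 : B = π
      have hx2 : x = 1/2 := by simp only [hxdef]; rw [← h2]; norm_num
      rw [hBdef, hx2, beta_eq_gamma (by norm_num) (by norm_num)]
      norm_num [Real.Gamma_one_half_eq, Real.Gamma_one]
      rw [Real.mul_self_sqrt Real.pi_pos.le]
    · have hd3 : (3:ℝ) ≤ d := by
        have : (2:ℕ) < d := by exact_mod_cast (by exact_mod_cast h3 : (2:ℝ) < d)
        exact_mod_cast this
      have hx1 : 0 < x - 1/2 := by simp only [hxdef]; linarith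
      have hup : B ^ 2 ≤ π / (x - 1/2) := by
        have h1 : B ≤ Beta (x - 1/2) (1/2) := beta_anti hx1 (by linarith)
        have h2 := beta_funeq hx1
        rw [show x - 1/2 + 1/2 = x by ring] at h2
        nlinarith [beta_pos hx1]
      have h5 : B ^ 2 ≤ π ^ 2 := by
        have : π / (x - 1/2) ≤ π ^ 2 := by
          rw [div_le_iff₀ hx1]
          nlinarith [Real.pi_gt_three]
        linarith
      calc B = Real.sqrt (B ^ 2) := (Real.sqrt_sq hBpos.le).symm
        _ ≤ Real.sqrt (π ^ 2) := Real.sqrt_le_sqrt h5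
        _ = π := Real.sqrt_sq Real.pi_pos.le
  · intro hd5
    have hd5' : (5:ℝ) ≤ d := by exact_mod_cast hd5
    refine ⟨hlower, ?_⟩
    have hx1 : 0 < x - 1/2 := by simp only [hxdef]; linarith
    have hup : B ^ 2 ≤ π / (x - 1/2) := by
      have h1 : B ≤ Beta (x - 1/2) (1/2) := beta_anti hx1 (by linarith)
      have h2 := beta_funeq hx1
      rw [show x - 1/2 + 1/2 = x by ring] at h2
      nlinarith [beta_pos hx1]
    have hd3pos : (0:ℝ) < (d:ℝ) - 3 := by linarith
    have h5 : B ^ 2 ≤ 16 / ((d:ℝ) - 3) := by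
      have : π / (x - 1/2) ≤ 16 / ((d:ℝ) - 3) := by
        rw [div_le_div_iff₀ hx1 hd3pos]
        simp only [hxdef]
        nlinarith [Real.pi_lt_d2]
      linarith
    calc B = Real.sqrt (B ^ 2) := (Real.sqrt_sq hBpos.le).symm
      _ ≤ Real.sqrt (16 / ((d:ℝ) - 3)) := Real.sqrt_le_sqrt h5
      _ = 4 / Real.sqrt ((d:ℝ) - 3) := by
          rw [Real.sqrt_div (by norm_num : (0:ℝ) ≤ 16) _, show (16:ℝ) = 4^2 by norm_num,
            Real.sqrt_sq (by norm_num : (0:ℝ) ≤ 4)]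
end
end

section
/- For every integer d ≥ 2 and every x ∈ [1/2, 1), the regularized incomplete Beta function satisfies I_x((d−1)/2, 1/2) ≥ 1 − 2·√(2(1−x)) / B((d−1)/2, 1/2). Moreover, lim_{x → 1⁻} (1 − I_x((d−1)/2, 1/2)) / √(1−x) = 2 / B((d−1)/2, 1/2). -/
open Real

noncomputable section

/-- The regularized incomplete Beta function
`I_x(a,b) = (∫₀ˣ t^{a−1}(1−t)^{b−1} dt)/B(a,b)`. -/
def regIncBeta (a b x : ℝ) : ℝ :=
  (∫ t in (0 : ℝ)..x, t ^ (a - 1) * (1 - t) ^ (b - 1)) / Beta a b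

open MeasureTheory Set Filter

private lemma beta_integrand_intble {a b : ℝ} (ha : 0 < a) (hb : 0 < b) :
    IntervalIntegrable (fun t : ℝ => t ^ (a - 1) * (1 - t) ^ (b - 1)) volume 0 1 := by
  have h := Complex.betaIntegral_convergent (u := (a : ℂ)) (v := (b : ℂ))
    (by simpa using ha) (by simpa using hb)
  rw [intervalIntegrable_iff_integrableOn_Ioc_of_le zero_le_one] at h ⊢
  have h2 : IntegrableOn (fun t : ℝ => ‖(t : ℂ) ^ ((a : ℂ) - 1) * (1 - (t : ℂ)) ^ ((b : ℂ) - 1)‖)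
      (Ioc (0:ℝ) 1) volume := h.norm
  refine h2.congr_fun (fun t ht => ?_) measurableSet_Ioc
  obtain ⟨ht0, ht1⟩ := ht
  have e1 : ((t : ℂ) ^ ((a : ℂ) - 1)) = ((t ^ (a - 1) : ℝ) : ℂ) := by
    rw [Complex.ofReal_cpow ht0.le]; push_cast; ring_nf
  have e2 : ((1 - (t : ℂ)) ^ ((b : ℂ) - 1)) = (((1 - t) ^ (b - 1) : ℝ) : ℂ) := by
    rw [Complex.ofReal_cpow (by linarith : (0:ℝ) ≤ 1 - t)]; push_cast; ring_nf
  have hnn : 0 ≤ t ^ (a - 1) * (1 - t) ^ (b - 1) :=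
    mul_nonneg (Real.rpow_nonneg ht0.le _) (Real.rpow_nonneg (by linarith) _)
  simp only [e1, e2, ← Complex.ofReal_mul, Complex.norm_real, Real.norm_eq_abs,
    abs_of_nonneg hnn]

private lemma integral_one_sub_rpow {x : ℝ} (hx : x ≤ 1) :
    ∫ t in x..(1:ℝ), (1 - t) ^ ((1:ℝ)/2 - 1) = 2 * Real.sqrt (1 - x) := by
  have h := intervalIntegral.integral_comp_sub_left
    (a := x) (b := 1) (fun u : ℝ => u ^ ((1:ℝ)/2 - 1)) 1
  rw [h, integral_rpow (Or.inl (by norm_num))]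
  have h0 : (1:ℝ) - 1 = 0 := by norm_num
  rw [h0, Real.zero_rpow (by norm_num)]
  rw [Real.sqrt_eq_rpow]
  norm_num
  ring

private lemma intble_one_sub_rpow (x : ℝ) :
    IntervalIntegrable (fun t : ℝ => (1 - t) ^ ((1:ℝ)/2 - 1)) volume x 1 := by
  have h : IntervalIntegrable (fun u : ℝ => u ^ ((1:ℝ)/2 - 1)) volume (1 - x) (1 - 1) :=
    intervalIntegral.intervalIntegrable_rpow' (by norm_num)
  have h2 := h.comp_sub_left 1
  norm_num at h2 ⊢
  exact h2

/-- **Lemma (lower bound and `x → 1⁻` asymptotics of `I_x((d−1)/2, 1/2)`)**. -/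
theorem regIncBeta_near_one
    (d : ℕ) (hd2 : 2 ≤ d) :
    (∀ x ∈ Set.Ico (1 / 2 : ℝ) 1,
        1 - 2 * Real.sqrt (2 * (1 - x)) / Beta (((d : ℝ) - 1) / 2) (1 / 2) ≤
          regIncBeta (((d : ℝ) - 1) / 2) (1 / 2) x) ∧
      Filter.Tendsto
        (fun x : ℝ =>
          (1 - regIncBeta (((d : ℝ) - 1) / 2) (1 / 2) x) / Real.sqrt (1 - x))
        (nhdsWithin 1 (Set.Iio 1))
        (nhds (2 / Beta (((d : ℝ) - 1) / 2) (1 / 2))) := by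
  set a : ℝ := ((d : ℝ) - 1) / 2 with ha_def
  have had : (2:ℝ) ≤ d := by exact_mod_cast hd2
  have ha : (1:ℝ)/2 ≤ a := by rw [ha_def]; linarith
  have ha0 : (0:ℝ) < a := by linarith
  set f : ℝ → ℝ := fun t => t ^ (a - 1) * (1 - t) ^ ((1:ℝ)/2 - 1) with hf_def
  have hfint : IntervalIntegrable f volume 0 1 := beta_integrand_intble ha0 (by norm_num)
  have hB_pos : 0 < Beta a (1/2) := by
    refine intervalIntegral.intervalIntegral_pos_of_pos_on hfint (fun t ht => ?_) zero_lt_one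
    exact mul_pos (Real.rpow_pos_of_pos ht.1 _) (Real.rpow_pos_of_pos (by linarith [ht.2]) _)
  have hB : Beta a (1/2) ≠ 0 := hB_pos.ne'
  -- integrability on subintervals
  have hsub : ∀ x ∈ Set.Icc (0:ℝ) 1, IntervalIntegrable f volume 0 x ∧
      IntervalIntegrable f volume x 1 := by
    intro x hx
    constructor
    · refine hfint.mono_set ?_
      rw [Set.uIcc_of_le hx.1, Set.uIcc_of_le zero_le_one]
      exact Set.Icc_subset_Icc le_rfl hx.2
    · refine hfint.mono_set ?_
      rw [Set.uIcc_of_le hx.2, Set.uIcc_of_le zero_le_one]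
      exact Set.Icc_subset_Icc hx.1 le_rfl
  -- tail representation
  have htail : ∀ x ∈ Set.Icc (0:ℝ) 1,
      1 - regIncBeta a (1/2) x = (∫ t in x..(1:ℝ), f t) / Beta a (1/2) := by
    intro x hx
    have hsplit : (∫ t in (0:ℝ)..x, f t) + ∫ t in x..(1:ℝ), f t = Beta a (1/2) :=
      intervalIntegral.integral_add_adjacent_intervals (hsub x hx).1 (hsub x hx).2
    have : regIncBeta a (1/2) x = (∫ t in (0:ℝ)..x, f t) / Beta a (1/2) := rfl
    rw [this]
    field_simp
    linarith
  -- upper bound on tail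
  have htail_le : ∀ x, x ∈ Set.Icc (0:ℝ) 1 → ∀ c : ℝ, (∀ t ∈ Set.Icc x 1, t ^ (a-1) ≤ c) →
      (∫ t in x..(1:ℝ), f t) ≤ c * (2 * Real.sqrt (1 - x)) := by
    intro x hxm c hc
    have hx1 : x ≤ 1 := hxm.2
    have hintf : IntervalIntegrable f volume x 1 := (hsub x hxm).2
    calc (∫ t in x..(1:ℝ), f t)
        ≤ ∫ t in x..(1:ℝ), c * (1 - t) ^ ((1:ℝ)/2 - 1) := by
          refine intervalIntegral.integral_mono_on hx1 hintf
            ((intble_one_sub_rpow x).const_mul c) (fun t ht => ?_)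
          exact mul_le_mul_of_nonneg_right (hc t ht)
            (Real.rpow_nonneg (by linarith [ht.2]) _)
      _ = c * (2 * Real.sqrt (1 - x)) := by
          rw [intervalIntegral.integral_const_mul, integral_one_sub_rpow hx1]
  -- lower bound on tail
  have htail_ge : ∀ x, x ∈ Set.Icc (0:ℝ) 1 → ∀ c : ℝ,
      (∀ t ∈ Set.Icc x 1, c ≤ t ^ (a-1)) →
      c * (2 * Real.sqrt (1 - x)) ≤ ∫ t in x..(1:ℝ), f t := by
    intro x hxm c hc
    have hx1 : x ≤ 1 := hxm.2
    calc c * (2 * Real.sqrt (1 - x))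
        = ∫ t in x..(1:ℝ), c * (1 - t) ^ ((1:ℝ)/2 - 1) := by
          rw [intervalIntegral.integral_const_mul, integral_one_sub_rpow hx1]
      _ ≤ ∫ t in x..(1:ℝ), f t := by
          refine intervalIntegral.integral_mono_on hx1
            ((intble_one_sub_rpow x).const_mul c) (hsub x hxm).2 (fun t ht => ?_)
          exact mul_le_mul_of_nonneg_right (hc t ht)
            (Real.rpow_nonneg (by linarith [ht.2]) _)
  constructor
  · -- part 1
    intro x hx
    have hx1 : x ≤ 1 := hx.2.le
    have hpt : ∀ t ∈ Set.Icc x 1, t ^ (a-1) ≤ Real.sqrt 2 := by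
      intro t ht
      have ht2 : (1:ℝ)/2 ≤ t := le_trans hx.1 ht.1
      have ht0 : (0:ℝ) < t := by linarith
      calc t ^ (a-1) ≤ t ^ (-((1:ℝ)/2)) :=
            Real.rpow_le_rpow_of_exponent_ge ht0 ht.2 (by linarith)
        _ ≤ ((1:ℝ)/2) ^ (-((1:ℝ)/2)) :=
            Real.rpow_le_rpow_of_nonpos (by norm_num) ht2 (by norm_num)
        _ = Real.sqrt 2 := by
            rw [Real.rpow_neg (by norm_num), ← Real.sqrt_eq_rpow,
              show (1/2:ℝ) = 2⁻¹ by norm_num, Real.sqrt_inv, inv_inv]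
    have h1 := htail_le x ⟨by linarith [hx.1], hx1⟩ (Real.sqrt 2) hpt
    have heq := htail x ⟨by linarith [hx.1], hx1⟩
    have hsqrt : 2 * Real.sqrt (2 * (1 - x)) = Real.sqrt 2 * (2 * Real.sqrt (1 - x)) := by
      rw [Real.sqrt_mul (by norm_num)]; ring
    have hdiv : (∫ t in x..(1:ℝ), f t) / Beta a (1/2)
        ≤ Real.sqrt 2 * (2 * Real.sqrt (1 - x)) / Beta a (1/2) := by gcongr
    rw [hsqrt]
    linarith
  · -- part 2
    have hev : Set.Ioo (1/2:ℝ) 1 ∈ nhdsWithin (1:ℝ) (Set.Iio 1) :=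
      Ioo_mem_nhdsLT_of_mem (by constructor <;> norm_num)
    -- bounds pointwise
    have hmin : ∀ x ∈ Set.Ioo (1/2:ℝ) 1, ∀ t ∈ Set.Icc x 1,
        min (x ^ (a-1)) 1 ≤ t ^ (a-1) := by
      intro x hx t ht
      have hx0 : (0:ℝ) < x := by linarith [hx.1]
      have ht0 : (0:ℝ) < t := lt_of_lt_of_le hx0 ht.1
      rcases le_or_gt 1 a with h | h
      · exact le_trans (min_le_left _ _) (Real.rpow_le_rpow hx0.le ht.1 (by linarith))
      · exact le_trans (min_le_right _ _)
          (Real.one_le_rpow_of_pos_of_le_one_of_nonpos ht0 ht.2 (by linarith))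
    have hmax : ∀ x ∈ Set.Ioo (1/2:ℝ) 1, ∀ t ∈ Set.Icc x 1,
        t ^ (a-1) ≤ max (x ^ (a-1)) 1 := by
      intro x hx t ht
      have hx0 : (0:ℝ) < x := by linarith [hx.1]
      have ht0 : (0:ℝ) < t := lt_of_lt_of_le hx0 ht.1
      rcases le_or_gt 1 a with h | h
      · exact le_trans (Real.rpow_le_one ht0.le ht.2 (by linarith)) (le_max_right _ _)
      · exact le_trans (Real.rpow_le_rpow_of_nonpos hx0 ht.1 (by linarith)) (le_max_left _ _)
    -- the intermediate function
    set H : ℝ → ℝ := fun x => (∫ t in x..(1:ℝ), f t) / Real.sqrt (1 - x) with hH_def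
    have hHlow : ∀ᶠ x in nhdsWithin (1:ℝ) (Set.Iio 1),
        2 * min (x ^ (a-1)) 1 ≤ H x := by
      filter_upwards [hev] with x hx
      have hs : 0 < Real.sqrt (1 - x) := Real.sqrt_pos.mpr (by linarith [hx.2])
      have h := htail_ge x ⟨by linarith [hx.1], hx.2.le⟩ _ (hmin x hx)
      rw [hH_def]
      rw [le_div_iff₀ hs]
      calc 2 * min (x ^ (a-1)) 1 * Real.sqrt (1 - x)
          = min (x ^ (a-1)) 1 * (2 * Real.sqrt (1 - x)) := by ring
        _ ≤ _ := h
    have hHhigh : ∀ᶠ x in nhdsWithin (1:ℝ) (Set.Iio 1),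
        H x ≤ 2 * max (x ^ (a-1)) 1 := by
      filter_upwards [hev] with x hx
      have hs : 0 < Real.sqrt (1 - x) := Real.sqrt_pos.mpr (by linarith [hx.2])
      have h := htail_le x ⟨by linarith [hx.1], hx.2.le⟩ _ (hmax x hx)
      rw [hH_def]
      rw [div_le_iff₀ hs]
      calc (∫ t in x..(1:ℝ), f t)
          ≤ max (x ^ (a-1)) 1 * (2 * Real.sqrt (1 - x)) := h
        _ = 2 * max (x ^ (a-1)) 1 * Real.sqrt (1 - x) := by ring
    have hcont : ContinuousAt (fun x : ℝ => x ^ (a-1)) 1 :=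
      Real.continuousAt_rpow_const 1 (a-1) (Or.inl one_ne_zero)
    have hLow : Filter.Tendsto (fun x : ℝ => 2 * min (x ^ (a-1)) 1)
        (nhdsWithin (1:ℝ) (Set.Iio 1)) (nhds 2) := by
      have : ContinuousAt (fun x : ℝ => 2 * min (x ^ (a-1)) 1) 1 :=
        continuousAt_const.mul (hcont.min continuousAt_const)
      have h2 := this.tendsto
      simp only [Real.one_rpow, min_self, mul_one] at h2
      exact h2.mono_left nhdsWithin_le_nhds
    have hHigh : Filter.Tendsto (fun x : ℝ => 2 * max (x ^ (a-1)) 1)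
        (nhdsWithin (1:ℝ) (Set.Iio 1)) (nhds 2) := by
      have : ContinuousAt (fun x : ℝ => 2 * max (x ^ (a-1)) 1) 1 :=
        continuousAt_const.mul (hcont.max continuousAt_const)
      have h2 := this.tendsto
      simp only [Real.one_rpow, max_self, mul_one] at h2
      exact h2.mono_left nhdsWithin_le_nhds
    have hHtend : Filter.Tendsto H (nhdsWithin (1:ℝ) (Set.Iio 1)) (nhds 2) :=
      tendsto_of_tendsto_of_tendsto_of_le_of_le' hLow hHigh hHlow hHhigh
    have hfinal : Filter.Tendsto (fun x => H x / Beta a (1/2))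
        (nhdsWithin (1:ℝ) (Set.Iio 1)) (nhds (2 / Beta a (1/2))) :=
      hHtend.div_const _
    refine hfinal.congr' ?_
    filter_upwards [hev] with x hx
    rw [hH_def]
    rw [htail x ⟨by linarith [hx.1], hx.2.le⟩]
    rw [div_right_comm]
end
end

section
/- Fix training inputs X₁,…,Xₙ ∈ S^{d-1}, an index i ∈ {1,…,n}, and v* ∈ S^{d-1} with v*ᵀX_i = 0; set r_i := min_{j ≠ i} |v*ᵀX_j|. Suppose there exist k, l ∈ {1,…,p} such that V₀[k]/‖V₀[k]‖₂ lies in B⁺ := {v ∈ S^{d-1} : ‖v − v*‖₂ < r_i and X_iᵀv > 0} and V₀[l]/‖V₀[l]‖₂ lies in B⁻ := {v ∈ S^{d-1} : ‖v − v*‖₂ < r_i and X_iᵀv < 0}. Then the j-th block rows of H satisfy: H_j[k] = H_j[l] for every j ∈ {1,…,n} \ {i}, H_i[k] = X_iᵀ, and H_i[l] = 0. -/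
open MeasureTheory ProbabilityTheory Real Matrix
open scoped ENNReal RealInnerProductSpace Classical

noncomputable section

/-- **Lemma (splitting a cap around a vector orthogonal to `X_i`)**: if the directions of
`V₀[k]` and `V₀[l]` lie in the two halves (with respect to the sign of `X_iᵀ·`) of the cap
of radius `r_i = min_{j ≠ i} |v*ᵀX_j|` around `v*` (where `v*ᵀX_i = 0`), then the `k`-th
and `l`-th blocks of all rows of `H` other than the `i`-th agree, the `k`-th block of the
`i`-th row is `X_iᵀ`, and the `l`-th block of the `i`-th row is `0`. -/
theorem cap_splitting_blocks
    (d n p : ℕ) (hd2 : 2 ≤ d)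
    (X : Fin n → EuclideanSpace ℝ (Fin d))
    (hX : ∀ i, X i ∈ Metric.sphere (0 : EuclideanSpace ℝ (Fin d)) 1)
    (V : Fin p → EuclideanSpace ℝ (Fin d)) (hV : ∀ j, V j ≠ 0)
    (i : Fin n)
    (vstar : EuclideanSpace ℝ (Fin d))
    (hvs : vstar ∈ Metric.sphere (0 : EuclideanSpace ℝ (Fin d)) 1)
    (hvsXi : ⟪vstar, X i⟫ = 0)
    (r : ℝ) (hr : r = ⨅ j : {j : Fin n // j ≠ i}, |⟪vstar, X (j : Fin n)⟫|)
    (k l : Fin p)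
    (hk : ‖dir (V k) - vstar‖ < r ∧ 0 < ⟪X i, dir (V k)⟫)
    (hl : ‖dir (V l) - vstar‖ < r ∧ ⟪X i, dir (V l)⟫ < 0) :
    (∀ j : Fin n, j ≠ i → ∀ c : Fin d, Hmat V X j (k, c) = Hmat V X j (l, c)) ∧
      (∀ c : Fin d, Hmat V X i (k, c) = X i c) ∧
      (∀ c : Fin d, Hmat V X i (l, c) = 0) := by
  have hsign : ∀ (x : EuclideanSpace ℝ (Fin d)) (j : Fin p),
      (0 < ⟪x, V j⟫) ↔ 0 < ⟪x, dir (V j)⟫ := by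
    intro x j
    have hn : (0:ℝ) < ‖V j‖⁻¹ := inv_pos.mpr (norm_pos_iff.mpr (hV j))
    have hd : ⟪x, dir (V j)⟫ = ‖V j‖⁻¹ * ⟪x, V j⟫ := by
      unfold dir; exact real_inner_smul_right x (V j) _
    rw [hd]
    constructor
    · intro h; exact mul_pos hn h
    · intro h
      by_contra hna
      push_neg at hna
      have : ‖V j‖⁻¹ * ⟪x, V j⟫ ≤ 0 := mul_nonpos_of_nonneg_of_nonpos hn.le hna
      linarith
  have key : ∀ (m : Fin p), ‖dir (V m) - vstar‖ < r →
      ∀ j : Fin n, j ≠ i → ((0 < ⟪X j, dir (V m)⟫) ↔ 0 < ⟪vstar, X j⟫) := by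
    intro m hm j hj
    have hrle : r ≤ |⟪vstar, X j⟫| := by
      rw [hr]
      have hbdd : BddBelow (Set.range fun j : {j : Fin n // j ≠ i} =>
          |⟪vstar, X (j : Fin n)⟫|) :=
        ⟨0, fun b hb => by obtain ⟨t, rfl⟩ := hb; positivity⟩
      exact ciInf_le hbdd ⟨j, hj⟩
    have hXj : ‖X j‖ = 1 := by simpa using hX j
    have hcom : ⟪X j, vstar⟫ = ⟪vstar, X j⟫ := real_inner_comm _ _
    have hcs : |⟪X j, dir (V m)⟫ - ⟪vstar, X j⟫| < |⟪vstar, X j⟫| := by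
      calc |⟪X j, dir (V m)⟫ - ⟪vstar, X j⟫| = |⟪X j, dir (V m) - vstar⟫| := by
            rw [inner_sub_right, hcom]
        _ ≤ ‖X j‖ * ‖dir (V m) - vstar‖ := abs_real_inner_le_norm _ _
        _ < r := by rw [hXj, one_mul]; exact hm
        _ ≤ _ := hrle
    rw [abs_lt] at hcs
    rcases le_or_gt ⟪vstar, X j⟫ 0 with ha | ha
    · rw [abs_of_nonpos ha] at hcs
      constructor
      · intro hb; linarith [hcs.1]
      · intro hb; linarith
    · rw [abs_of_pos ha] at hcs
      constructor
      · intro _; exact ha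
      · intro _; linarith [hcs.1]
  refine ⟨?_, ?_, ?_⟩
  · intro j hj c
    simp only [Hmat, Matrix.of_apply, hrow]
    have hiff : (0 < ⟪X j, V k⟫) ↔ (0 < ⟪X j, V l⟫) := by
      rw [hsign (X j) k, hsign (X j) l, key k hk.1 j hj, key l hl.1 j hj]
    by_cases h : 0 < ⟪X j, V k⟫
    · rw [if_pos h, if_pos (hiff.mp h)]
    · rw [if_neg h, if_neg (fun h' => h (hiff.mpr h'))]
  · intro c
    simp only [Hmat, Matrix.of_apply, hrow]
    rw [if_pos ((hsign (X i) k).mpr hk.2)]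
  · intro c
    simp only [Hmat, Matrix.of_apply, hrow]
    rw [if_neg]
    rw [hsign (X i) l]
    exact not_lt.mpr hl.2.le
end
end

section
/- Let X₁,…,X_k be i.i.d. random vectors taking values in a finite-dimensional real inner product space with ‖X_i‖₂ ≤ U almost surely for some constant U > 0. Then for every q ∈ [1, ∞), the probability that ‖(1/k)·Σ_{i=1}^k X_i − E[X₁]‖₂ ≥ k^{1/(2q) − 1/2} is strictly less than 2e²·exp(−k^{1/q}/(8U²)). -/
open MeasureTheory ProbabilityTheory Real

noncomputable section



lemma sinh_le_mul_cosh {s : ℝ} (hs : 0 ≤ s) : Real.sinh s ≤ s * Real.cosh s := by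
  have hmono : Monotone (fun t : ℝ => t * Real.cosh t - Real.sinh t) := by
    apply monotone_of_deriv_nonneg
    · exact (differentiable_id.mul Real.differentiable_cosh).sub Real.differentiable_sinh
    · intro t
      have h : HasDerivAt (fun t : ℝ => t * Real.cosh t - Real.sinh t)
          (1 * Real.cosh t + t * Real.sinh t - Real.cosh t) t :=
        ((hasDerivAt_id t).mul (Real.hasDerivAt_cosh t)).sub (Real.hasDerivAt_sinh t)
      rw [h.deriv]
      have : (1 : ℝ) * Real.cosh t + t * Real.sinh t - Real.cosh t = t * Real.sinh t := by ring
      rw [this]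
      rcases le_total 0 t with ht | ht
      · exact mul_nonneg ht (Real.sinh_nonneg_iff.2 ht)
      · have h2 : Real.sinh t ≤ 0 := by
          rw [← Real.sinh_zero]; exact Real.sinh_le_sinh.2 ht
        nlinarith [mul_nonneg (neg_nonneg.2 ht) (neg_nonneg.2 h2)]
  have := hmono hs
  simpa using this

lemma convexOn_cosh_sqrt : ConvexOn ℝ (Set.Ici (0:ℝ)) (fun u => Real.cosh (Real.sqrt u)) := by
  have hint : interior (Set.Ici (0:ℝ)) = Set.Ioi 0 := interior_Ici
  apply convexOn_of_hasDerivWithinAt2_nonneg (f' := fun u => Real.sinh (Real.sqrt u) / (2 * Real.sqrt u))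
      (f'' := fun u => (Real.cosh (Real.sqrt u) - Real.sinh (Real.sqrt u) / Real.sqrt u) / (4 * u))
      (convex_Ici 0)
  · exact (Real.continuous_cosh.comp Real.continuous_sqrt).continuousOn
  · intro u hu
    rw [hint] at hu
    have hu0 : (0:ℝ) < u := hu
    have h1 : HasDerivAt (fun u => Real.cosh (Real.sqrt u))
        (Real.sinh (Real.sqrt u) * (1 / (2 * Real.sqrt u))) u :=
      (Real.hasDerivAt_cosh (Real.sqrt u)).comp u (hasDerivAt_sqrt hu0.ne')
    have : Real.sinh (Real.sqrt u) * (1 / (2 * Real.sqrt u))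
        = Real.sinh (Real.sqrt u) / (2 * Real.sqrt u) := by ring
    rw [this] at h1
    exact h1.hasDerivWithinAt
  · intro u hu
    rw [hint] at hu
    have hu0 : (0:ℝ) < u := hu
    have hs : (0:ℝ) < Real.sqrt u := Real.sqrt_pos.2 hu0
    have h1 : HasDerivAt (fun u => Real.sinh (Real.sqrt u))
        (Real.cosh (Real.sqrt u) * (1 / (2 * Real.sqrt u))) u :=
      (Real.hasDerivAt_sinh (Real.sqrt u)).comp u (hasDerivAt_sqrt hu0.ne')
    have h2 : HasDerivAt (fun u : ℝ => 2 * Real.sqrt u) (2 * (1 / (2 * Real.sqrt u))) u :=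
      (hasDerivAt_sqrt hu0.ne').const_mul 2
    have h3 := h1.div h2 (by positivity)
    have heq : (Real.cosh (Real.sqrt u) * (1 / (2 * Real.sqrt u)) * (2 * Real.sqrt u) -
        Real.sinh (Real.sqrt u) * (2 * (1 / (2 * Real.sqrt u)))) / (2 * Real.sqrt u) ^ 2
        = (Real.cosh (Real.sqrt u) - Real.sinh (Real.sqrt u) / Real.sqrt u) / (4 * u) := by
      have h4 : (2 * Real.sqrt u) ^ 2 = 4 * u := by
        rw [mul_pow, Real.sq_sqrt hu0.le]; ring
      rw [h4]
      rw [div_eq_div_iff (by positivity) (by positivity)]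
      field_simp
    rw [heq] at h3
    exact h3.hasDerivWithinAt
  · intro u hu
    rw [hint] at hu
    have hu0 : (0:ℝ) < u := hu
    have hs : (0:ℝ) < Real.sqrt u := Real.sqrt_pos.2 hu0
    have h5 : Real.sinh (Real.sqrt u) / Real.sqrt u ≤ Real.cosh (Real.sqrt u) := by
      rw [div_le_iff₀ hs]; linarith [sinh_le_mul_cosh hs.le]
    have h6 : (0:ℝ) ≤ Real.cosh (Real.sqrt u) - Real.sinh (Real.sqrt u) / Real.sqrt u := by linarith
    positivity



lemma cosh_sqrt_mono {u1 u2 : ℝ} (h0 : 0 ≤ u1) (h : u1 ≤ u2) :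
    Real.cosh (Real.sqrt u1) ≤ Real.cosh (Real.sqrt u2) := by
  have := Real.sqrt_le_sqrt h
  rw [Real.cosh_le_cosh]
  rwa [abs_of_nonneg (Real.sqrt_nonneg _), abs_of_nonneg (Real.sqrt_nonneg _)]

lemma pointwise_cosh_bound {E : Type*} [NormedAddCommGroup E] [InnerProductSpace ℝ E]
    {L b : ℝ} (hL : 0 < L) (hb : 0 < b) (v y : E) (hy : ‖y‖ ≤ b) :
    Real.cosh (L * ‖v + y‖) ≤ Real.cosh (L * ‖v‖) * Real.cosh (L * b)
      + (Real.sinh (L * ‖v‖) * Real.sinh (L * b) / (‖v‖ * b)) * (inner ℝ v y : ℝ) := by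
  by_cases hv : v = 0
  · subst hv
    simp only [norm_zero, mul_zero, Real.sinh_zero, zero_mul, zero_div, Real.cosh_zero, one_mul,
      zero_add, inner_zero_left, mul_zero, add_zero]
    rw [Real.cosh_le_cosh, abs_of_nonneg (by positivity), abs_of_nonneg (by positivity)]
    exact mul_le_mul_of_nonneg_left hy hL.le
  · set a : ℝ := ‖v‖ with ha
    have hva : 0 < a := norm_pos_iff.2 hv
    set G : ℝ → ℝ := fun u => Real.cosh (Real.sqrt u) with hG
    set p : ℝ := (L * (a - b)) ^ 2 with hp
    set qq : ℝ := (L * (a + b)) ^ 2 with hq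
    set ip : ℝ := (inner ℝ v y : ℝ) with hip
    set w : ℝ := L ^ 2 * (a ^ 2 + 2 * ip + b ^ 2) with hw
    have hCS : |ip| ≤ a * b := by
      calc |ip| ≤ ‖v‖ * ‖y‖ := abs_real_inner_le_norm v y
        _ ≤ a * b := by apply mul_le_mul_of_nonneg_left hy hva.le
    have hCS1 : -(a*b) ≤ ip := neg_le_of_abs_le hCS
    have hCS2 : ip ≤ a*b := le_of_abs_le hCS
    have hpw : p ≤ w := by rw [hp, hw]; nlinarith [sq_nonneg L, hL.le]
    have hwq : w ≤ qq := by rw [hq, hw]; nlinarith [sq_nonneg L, hL.le]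
    have hqp4 : qq - p = 4 * L ^ 2 * (a * b) := by rw [hp, hq]; ring
    have hpq : p < qq := by nlinarith [mul_pos (mul_pos (mul_pos hL hL) hva) hb]
    -- step 1: LHS ≤ G w
    have hnorm : ‖v + y‖ ^ 2 ≤ a ^ 2 + 2 * ip + b ^ 2 := by
      have := @norm_add_sq_real E _ _ v y
      nlinarith [norm_nonneg y, sq_nonneg (‖y‖ - b)]
    have step1 : Real.cosh (L * ‖v + y‖) ≤ G w := by
      have h1 : Real.cosh (L * ‖v + y‖) = G ((L * ‖v + y‖) ^ 2) := by
        rw [hG]; simp only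
        rw [Real.sqrt_sq (by positivity)]
      rw [h1]
      apply cosh_sqrt_mono (by positivity)
      rw [hw]; nlinarith [sq_nonneg L, hL.le]
    -- step 2: convexity
    have hqp0 : (0:ℝ) < qq - p := by linarith
    have hconv := convexOn_cosh_sqrt
    have hmem_p : p ∈ Set.Ici (0:ℝ) := by rw [hp]; exact Set.mem_Ici.2 (sq_nonneg _)
    have hmem_q : qq ∈ Set.Ici (0:ℝ) := by rw [hq]; exact Set.mem_Ici.2 (sq_nonneg _)
    have ht1 : (0:ℝ) ≤ (qq - w) / (qq - p) := by
      apply div_nonneg (by linarith) hqp0.le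
    have ht2 : (0:ℝ) ≤ (w - p) / (qq - p) := by
      apply div_nonneg (by linarith) hqp0.le
    have htsum : (qq - w) / (qq - p) + (w - p) / (qq - p) = 1 := by
      field_simp
      ring
    have hcomb : ((qq - w) / (qq - p)) • p + ((w - p) / (qq - p)) • qq = w := by
      simp only [smul_eq_mul]
      field_simp
      ring
    have step2 : G w ≤ (qq - w) / (qq - p) * G p + (w - p) / (qq - p) * G qq := by
      have := hconv.2 hmem_p hmem_q ht1 ht2 htsum
      rw [hcomb] at this
      simpa [smul_eq_mul, hG] using this
    have hGp : G p = Real.cosh (L * a - L * b) := by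
      rw [hG, hp]
      simp only
      rw [Real.sqrt_sq_eq_abs, Real.cosh_abs, mul_sub]
    have hGq : G qq = Real.cosh (L * a + L * b) := by
      rw [hG, hq]
      simp only
      rw [Real.sqrt_sq_eq_abs, Real.cosh_abs, mul_add]
    have key : (qq - w) / (qq - p) * Real.cosh (L * a - L * b)
        + (w - p) / (qq - p) * Real.cosh (L * a + L * b)
        = Real.cosh (L * a) * Real.cosh (L * b)
          + Real.sinh (L * a) * Real.sinh (L * b) / (a * b) * ip := by
      rw [Real.cosh_add, Real.cosh_sub]
      have h2w : 2 * w - p - qq = 4 * L ^ 2 * ip := by rw [hw, hp, hq]; ring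
      set C := Real.cosh (L * a) * Real.cosh (L * b) with hC
      set S := Real.sinh (L * a) * Real.sinh (L * b) with hS
      have e1 : (qq - w) / (qq - p) * (C - S) + (w - p) / (qq - p) * (C + S)
          = C + S * ((2 * w - p - qq) / (qq - p)) := by
        field_simp
        ring
      have e2 : (2 * w - p - qq) / (qq - p) = ip / (a * b) := by
        rw [h2w, hqp4]
        rw [div_eq_div_iff (by positivity) (by positivity)]
        ring
      rw [e1, e2]
      ring
    rw [hGp, hGq] at step2
    rw [key] at step2
    calc Real.cosh (L * ‖v + y‖) ≤ G w := step1
      _ ≤ _ := step2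




lemma cosh_mul_norm_le {E : Type*} [NormedAddCommGroup E] {L c : ℝ} (hL : 0 ≤ L) (x : E)
    (hx : ‖x‖ ≤ c) : Real.cosh (L * ‖x‖) ≤ Real.cosh (L * c) := by
  have hc : (0:ℝ) ≤ c := le_trans (norm_nonneg x) hx
  rw [Real.cosh_le_cosh, abs_of_nonneg (by positivity), abs_of_nonneg (by positivity)]
  exact mul_le_mul_of_nonneg_left hx hL

lemma step_integral_bound {E : Type*} [NormedAddCommGroup E] [InnerProductSpace ℝ E]
    [FiniteDimensional ℝ E] [MeasurableSpace E] [BorelSpace E]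
    {L b : ℝ} (hL : 0 < L) (hb : 0 < b)
    (ν : Measure E) [IsProbabilityMeasure ν]
    (hmean : ∫ y, y ∂ν = 0) (hbd : ∀ᵐ y ∂ν, ‖y‖ ≤ b) (v : E) :
    ∫ y, Real.cosh (L * ‖v + y‖) ∂ν ≤ Real.cosh (L * ‖v‖) * Real.cosh (L * b) := by
  haveI : CompleteSpace E := FiniteDimensional.complete ℝ E
  have hcont : Continuous fun y : E => Real.cosh (L * ‖v + y‖) :=
    Real.continuous_cosh.comp (continuous_const.mul ((continuous_const.add continuous_id).norm))
  have hid : Integrable (fun y : E => y) ν := by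
    apply Integrable.mono' (integrable_const b) (stronglyMeasurable_id.aestronglyMeasurable)
    exact hbd
  have hfint : Integrable (fun y : E => Real.cosh (L * ‖v + y‖)) ν := by
    apply Integrable.mono' (integrable_const (Real.cosh (L * (‖v‖ + b))))
      hcont.aestronglyMeasurable
    filter_upwards [hbd] with y hy
    rw [Real.norm_eq_abs, abs_of_pos (Real.cosh_pos _)]
    exact cosh_mul_norm_le hL.le _ ((norm_add_le v y).trans (by linarith))
  have hgint : Integrable (fun y : E =>
      Real.cosh (L * ‖v‖) * Real.cosh (L * b)
        + (Real.sinh (L * ‖v‖) * Real.sinh (L * b) / (‖v‖ * b)) * (inner ℝ v y : ℝ)) ν :=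
    (integrable_const _).add ((hid.const_inner v).const_mul _)
  calc ∫ y, Real.cosh (L * ‖v + y‖) ∂ν
      ≤ ∫ y, (Real.cosh (L * ‖v‖) * Real.cosh (L * b)
        + (Real.sinh (L * ‖v‖) * Real.sinh (L * b) / (‖v‖ * b)) * (inner ℝ v y : ℝ)) ∂ν := by
        apply integral_mono_ae hfint hgint
        filter_upwards [hbd] with y hy
        exact pointwise_cosh_bound hL hb v y hy
    _ = Real.cosh (L * ‖v‖) * Real.cosh (L * b) := by
        rw [integral_add (integrable_const _) ((hid.const_inner v).const_mul _),
          integral_const, integral_const_mul, integral_inner hid, hmean,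
          inner_zero_right, mul_zero, add_zero, probReal_univ]
        simp





lemma step_rv_bound {E : Type*} [NormedAddCommGroup E] [InnerProductSpace ℝ E]
    [FiniteDimensional ℝ E] [MeasurableSpace E] [BorelSpace E]
    {Ω : Type*} [MeasureSpace Ω] [IsProbabilityMeasure (ℙ : Measure Ω)]
    {L b R : ℝ} (hL : 0 < L) (hb : 0 < b)
    (S Y : Ω → E) (hS : Measurable S) (hY : Measurable Y)
    (hindep : IndepFun S Y ℙ) (hmean : ∫ ω, Y ω ∂ℙ = 0)
    (hbd : ∀ᵐ ω ∂ℙ, ‖Y ω‖ ≤ b) (hbdS : ∀ᵐ ω ∂ℙ, ‖S ω‖ ≤ R) :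
    ∫ ω, Real.cosh (L * ‖S ω + Y ω‖) ∂ℙ
      ≤ (∫ ω, Real.cosh (L * ‖S ω‖) ∂ℙ) * Real.cosh (L * b) := by
  haveI : CompleteSpace E := FiniteDimensional.complete ℝ E
  set μS : Measure E := Measure.map S ℙ with hμS
  set ν : Measure E := Measure.map Y ℙ with hν
  haveI : IsProbabilityMeasure μS := Measure.isProbabilityMeasure_map hS.aemeasurable
  haveI : IsProbabilityMeasure ν := Measure.isProbabilityMeasure_map hY.aemeasurable
  have hprod : Measure.map (fun ω => (S ω, Y ω)) ℙ = μS.prod ν :=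
    (indepFun_iff_map_prod_eq_prod_map_map hS.aemeasurable hY.aemeasurable).1 hindep
  set f : E × E → ℝ := fun p => Real.cosh (L * ‖p.1 + p.2‖) with hf
  have hfc : Continuous f :=
    Real.continuous_cosh.comp (continuous_const.mul ((continuous_fst.add continuous_snd).norm))
  -- a.e. bounds on the product measure
  have hbdS' : ∀ᵐ x ∂μS, ‖x‖ ≤ R := (ae_map_iff hS.aemeasurable
    (measurableSet_le (measurable_norm) measurable_const)).2 hbdS
  have hbdY' : ∀ᵐ y ∂ν, ‖y‖ ≤ b := (ae_map_iff hY.aemeasurable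
    (measurableSet_le (measurable_norm) measurable_const)).2 hbd
  have hc2 : Continuous fun x : E => Real.cosh (L * ‖x‖) :=
    Real.continuous_cosh.comp (continuous_const.mul continuous_norm)
  have hc2' : Continuous fun x : E => Real.cosh (L * ‖x‖) * Real.cosh (L * b) :=
    hc2.mul continuous_const
  have hmean' : ∫ y, y ∂ν = 0 := by
    have h := integral_map (μ := (ℙ : Measure Ω)) (f := fun y : E => y) hY.aemeasurable aestronglyMeasurable_id
    exact h.trans hmean
  have haeprod : ∀ᵐ p ∂μS.prod ν, ‖p.1‖ ≤ R ∧ ‖p.2‖ ≤ b := by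
    rw [MeasureTheory.Measure.ae_prod_iff_ae_ae]
    · filter_upwards [hbdS'] with x hx
      filter_upwards [hbdY'] with y hy
      exact ⟨hx, hy⟩
    · apply MeasurableSet.inter
      · exact measurableSet_le (measurable_norm.comp measurable_fst) measurable_const
      · exact measurableSet_le (measurable_norm.comp measurable_snd) measurable_const
  have hfint : Integrable f (μS.prod ν) := by
    apply Integrable.mono' (integrable_const (Real.cosh (L * (R + b))))
      hfc.aestronglyMeasurable
    filter_upwards [haeprod] with p hp
    rw [Real.norm_eq_abs, abs_of_pos (Real.cosh_pos _)]
    exact cosh_mul_norm_le hL.le _ ((norm_add_le _ _).trans (add_le_add hp.1 hp.2))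
  have hcoshS : Integrable (fun x : E => Real.cosh (L * ‖x‖)) μS := by
    apply Integrable.mono' (integrable_const (Real.cosh (L * R))) hc2.aestronglyMeasurable
    filter_upwards [hbdS'] with x hx
    rw [Real.norm_eq_abs, abs_of_pos (Real.cosh_pos _)]
    exact cosh_mul_norm_le hL.le _ hx
  calc ∫ ω, Real.cosh (L * ‖S ω + Y ω‖) ∂ℙ
      = ∫ p, f p ∂(μS.prod ν) := by
        rw [← hprod, integral_map (hS.prodMk hY).aemeasurable hfc.aestronglyMeasurable]
    _ = ∫ x, ∫ y, f (x, y) ∂ν ∂μS := integral_prod f hfint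
    _ ≤ ∫ x, Real.cosh (L * ‖x‖) * Real.cosh (L * b) ∂μS := by
        apply integral_mono hfint.integral_prod_left (hcoshS.mul_const _)
        intro x
        exact step_integral_bound hL hb ν hmean' hbdY' x
    _ = (∫ x, Real.cosh (L * ‖x‖) ∂μS) * Real.cosh (L * b) := integral_mul_const _ _
    _ = (∫ ω, Real.cosh (L * ‖S ω‖) ∂ℙ) * Real.cosh (L * b) := by
        rw [hμS, integral_map hS.aemeasurable hc2.aestronglyMeasurable]




lemma sum_cosh_bound {E : Type*} [NormedAddCommGroup E] [InnerProductSpace ℝ E]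
    [FiniteDimensional ℝ E] [MeasurableSpace E] [BorelSpace E]
    {Ω : Type*} [MeasureSpace Ω] [IsProbabilityMeasure (ℙ : Measure Ω)]
    {ι : Type*} [DecidableEq ι] [Countable ι]
    {L b : ℝ} (hL : 0 < L) (hb : 0 < b)
    (Y : ι → Ω → E) (hmeasY : ∀ i, Measurable (Y i))
    (hindepY : iIndepFun Y ℙ)
    (hmeanY : ∀ i, ∫ ω, Y i ω ∂ℙ = 0)
    (hbdY : ∀ i, ∀ᵐ ω ∂ℙ, ‖Y i ω‖ ≤ b) (s : Finset ι) :
    ∫ ω, Real.cosh (L * ‖∑ i ∈ s, Y i ω‖) ∂ℙ ≤ Real.cosh (L * b) ^ s.card := by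
  classical
  induction s using Finset.cons_induction with
  | empty =>
    simp [Real.cosh_zero]
  | cons i s his ih =>
    have hSmeas : Measurable (fun ω => ∑ j ∈ s, Y j ω) := by
      exact Finset.measurable_sum s (fun j _ => hmeasY j)
    have hindepSY : IndepFun (fun ω => ∑ j ∈ s, Y j ω) (Y i) ℙ := by
      have h := hindepY.indepFun_finsetSum_of_notMem hmeasY his
      have hfun : (∑ j ∈ s, Y j) = fun ω => ∑ j ∈ s, Y j ω := by
        funext ω; simp [Finset.sum_apply]
      rwa [hfun] at h
    have hbdS : ∀ᵐ ω ∂ℙ, ‖∑ j ∈ s, Y j ω‖ ≤ (s.card : ℝ) * b := by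
      have hall : ∀ᵐ ω ∂ℙ, ∀ j, ‖Y j ω‖ ≤ b := ae_all_iff.2 hbdY
      filter_upwards [hall] with ω hω
      calc ‖∑ j ∈ s, Y j ω‖ ≤ ∑ j ∈ s, ‖Y j ω‖ := norm_sum_le _ _
        _ ≤ ∑ _j ∈ s, b := Finset.sum_le_sum (fun j _ => hω j)
        _ = (s.card : ℝ) * b := by rw [Finset.sum_const, nsmul_eq_mul]
    have hstep := step_rv_bound hL hb _ (Y i) hSmeas (hmeasY i) hindepSY (hmeanY i)
      (hbdY i) hbdS
    have hcongr : ∀ ω, (∑ j ∈ Finset.cons i s his, Y j ω) = (∑ j ∈ s, Y j ω) + Y i ω := by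
      intro ω; rw [Finset.sum_cons, add_comm]
    calc ∫ ω, Real.cosh (L * ‖∑ j ∈ Finset.cons i s his, Y j ω‖) ∂ℙ
        = ∫ ω, Real.cosh (L * ‖(∑ j ∈ s, Y j ω) + Y i ω‖) ∂ℙ := by
          congr 1; funext ω; rw [hcongr]
      _ ≤ (∫ ω, Real.cosh (L * ‖∑ j ∈ s, Y j ω‖) ∂ℙ) * Real.cosh (L * b) := hstep
      _ ≤ Real.cosh (L * b) ^ s.card * Real.cosh (L * b) := by
          apply mul_le_mul_of_nonneg_right ih (Real.cosh_pos _).le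
      _ = Real.cosh (L * b) ^ (Finset.cons i s his).card := by
          rw [Finset.card_cons, pow_succ]


set_option maxHeartbeats 1000000 in
/-- **Lemma (deviation of the empirical mean of bounded i.i.d. random vectors)**:
if `X₁,…,X_k` are i.i.d. random vectors in a finite-dimensional real inner product space
with `‖X_i‖ ≤ U` a.s., then for every `q ∈ [1,∞)`,
`P(‖(1/k)Σ X_i − E[X₁]‖ ≥ k^{1/(2q)−1/2}) < 2e²·exp(−k^{1/q}/(8U²))`. -/
theorem iid_mean_deviation_bound
    {E : Type*} [NormedAddCommGroup E] [InnerProductSpace ℝ E] [FiniteDimensional ℝ E]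
    [MeasurableSpace E] [BorelSpace E]
    {Ω : Type*} [MeasureSpace Ω] [IsProbabilityMeasure (ℙ : Measure Ω)]
    (k : ℕ) (hk : 0 < k)
    (X : Fin k → Ω → E)
    (hmeas : ∀ i, Measurable (X i))
    (hindep : iIndepFun X ℙ)
    (hident : ∀ i, Measure.map (X i) ℙ = Measure.map (X ⟨0, hk⟩) ℙ)
    (U : ℝ) (hU : 0 < U)
    (hbound : ∀ i, ∀ᵐ ω ∂ℙ, ‖X i ω‖ ≤ U)
    (q : ℝ) (hq : 1 ≤ q) :
    ℙ {ω | (k : ℝ) ^ (1 / (2 * q) - 1 / 2) ≤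
        ‖(1 / (k : ℝ)) • (∑ i, X i ω) - ∫ ω', X ⟨0, hk⟩ ω' ∂ℙ‖} <
      ENNReal.ofReal (2 * Real.exp 2 * Real.exp (-(k : ℝ) ^ (1 / q) / (8 * U ^ 2))) := by
  haveI : CompleteSpace E := FiniteDimensional.complete ℝ E
  have hq0 : (0:ℝ) < q := lt_of_lt_of_le one_pos hq
  have hkR : (0:ℝ) < (k:ℝ) := Nat.cast_pos.2 hk
  have hkne : (k:ℝ) ≠ 0 := hkR.ne'
  set b : ℝ := 2 * U with hbdef
  have hb : 0 < b := by positivity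
  set m : E := ∫ ω', X ⟨0, hk⟩ ω' ∂ℙ with hmdef
  set ε : ℝ := (k : ℝ) ^ (1 / (2 * q) - 1 / 2) with hεdef
  have hε : 0 < ε := Real.rpow_pos_of_pos hkR _
  set t : ℝ := (k:ℝ) * ε with htdef
  have ht : 0 < t := by positivity
  set L : ℝ := t / ((k:ℝ) * b ^ 2) with hLdef
  have hL : 0 < L := by positivity
  -- arithmetic of exponents
  have hε2 : (k:ℝ) * ε ^ 2 = (k:ℝ) ^ ((1:ℝ)/q) := by
    have h1 : ε ^ 2 = (k:ℝ) ^ ((1/(2*q) - 1/2) + (1/(2*q) - 1/2)) := by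
      rw [Real.rpow_add hkR, hεdef, sq]
    have h2 : (k:ℝ) * ε ^ 2 = (k:ℝ) ^ ((1:ℝ) + ((1/(2*q) - 1/2) + (1/(2*q) - 1/2))) := by
      rw [Real.rpow_add hkR, Real.rpow_one, h1]
    rw [h2]
    congr 1
    field_simp
    ring
  have hb2 : b ^ 2 = 4 * U ^ 2 := by rw [hbdef]; ring
  have hLt : L * t = (k:ℝ) ^ ((1:ℝ)/q) / (4 * U ^ 2) := by
    have h3 : L * t = (k:ℝ) * ε ^ 2 / b ^ 2 := by
      rw [hLdef, htdef]
      field_simp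
    rw [h3, hε2, hb2]
  have hq2 : (k:ℝ) * (L * b) ^ 2 / 2 = (k:ℝ) ^ ((1:ℝ)/q) / (8 * U ^ 2) := by
    have h3 : (k:ℝ) * (L * b) ^ 2 / 2 = L * t / 2 := by
      rw [hLdef]
      field_simp
    rw [h3, hLt]
    ring
  have hexp : -(L * t) + (k:ℝ) * (L * b) ^ 2 / 2 = -(k : ℝ) ^ ((1:ℝ) / q) / (8 * U ^ 2) := by
    rw [hq2, hLt]
    ring
  -- integrability and mean of X i
  have hXint : ∀ i, Integrable (X i) ℙ := by
    intro i
    apply Integrable.mono' (integrable_const U) (hmeas i).aestronglyMeasurable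
    exact hbound i
  have hXmean : ∀ i, ∫ ω, X i ω ∂ℙ = m := by
    intro i
    have hid : IdentDistrib (X i) (X ⟨0, hk⟩) ℙ ℙ :=
      ⟨(hmeas i).aemeasurable, (hmeas ⟨0, hk⟩).aemeasurable, hident i⟩
    exact hid.integral_eq
  have hmU : ‖m‖ ≤ U := by
    calc ‖m‖ ≤ ∫ ω, ‖X ⟨0,hk⟩ ω‖ ∂ℙ := norm_integral_le_integral_norm _
      _ ≤ ∫ (_ : Ω), U ∂ℙ := integral_mono_ae ((hXint _).norm) (integrable_const U) (hbound _)
      _ = U := by simp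
  -- centered variables
  set Y : Fin k → Ω → E := fun i => (fun x => x - m) ∘ (X i) with hYdef
  have hmeasY : ∀ i, Measurable (Y i) := fun i => (hmeas i).sub measurable_const
  have hindepY : iIndepFun Y ℙ :=
    hindep.comp (fun _ => fun x => x - m) (fun _ => measurable_id.sub measurable_const)
  have hmeanY : ∀ i, ∫ ω, Y i ω ∂ℙ = 0 := by
    intro i
    have h4 : ∫ ω, (X i ω - m) ∂ℙ = (∫ ω, X i ω ∂ℙ) - m := by
      rw [integral_sub (hXint i) (integrable_const m), integral_const]
      simp
    have h5 : ∫ ω, Y i ω ∂ℙ = ∫ ω, (X i ω - m) ∂ℙ := rfl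
    rw [h5, h4, hXmean i, sub_self]
  have hbdY : ∀ i, ∀ᵐ ω ∂ℙ, ‖Y i ω‖ ≤ b := by
    intro i
    filter_upwards [hbound i] with ω hω
    calc ‖Y i ω‖ = ‖X i ω - m‖ := rfl
      _ ≤ ‖X i ω‖ + ‖m‖ := norm_sub_le _ _
      _ ≤ U + U := add_le_add hω hmU
      _ = b := by rw [hbdef]; ring
  set W : Ω → E := fun ω => ∑ i, Y i ω with hWdef
  have hWmeas : Measurable W := Finset.measurable_sum _ (fun i _ => hmeasY i)
  have hWbd : ∀ᵐ ω ∂ℙ, ‖W ω‖ ≤ (k:ℝ) * b := by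
    have hall : ∀ᵐ ω ∂ℙ, ∀ i, ‖Y i ω‖ ≤ b := ae_all_iff.2 hbdY
    filter_upwards [hall] with ω hω
    calc ‖W ω‖ ≤ ∑ i, ‖Y i ω‖ := norm_sum_le _ _
      _ ≤ ∑ _i : Fin k, b := Finset.sum_le_sum fun i _ => hω i
      _ = (k:ℝ) * b := by simp [mul_comm]
  -- the key moment bound
  have hkey : ∫ ω, Real.cosh (L * ‖W ω‖) ∂ℙ ≤ Real.cosh (L * b) ^ k := by
    have h6 := sum_cosh_bound hL hb Y hmeasY hindepY hmeanY hbdY Finset.univ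
    simpa [Finset.card_univ] using h6
  -- rewrite the event
  have hset : {ω | ε ≤ ‖(1 / (k : ℝ)) • (∑ i, X i ω) - m‖} = {ω | t ≤ ‖W ω‖} := by
    ext ω
    have hWc : (1 / (k : ℝ)) • (∑ i, X i ω) - m = (1 / (k:ℝ)) • W ω := by
      have h1 : W ω = (∑ i, X i ω) - (k:ℝ) • m := by
        rw [hWdef]
        simp only [hYdef, Function.comp]
        rw [Finset.sum_sub_distrib, Finset.sum_const, Finset.card_univ, Fintype.card_fin]
        congr 1
        exact (Nat.cast_smul_eq_nsmul ℝ k m).symm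
      rw [h1, smul_sub, smul_smul]
      congr 1
      rw [one_div, inv_mul_cancel₀ hkne, one_smul]
    rw [Set.mem_setOf_eq, Set.mem_setOf_eq, hWc, norm_smul]
    rw [Real.norm_eq_abs, abs_of_pos (by positivity : (0:ℝ) < 1/(k:ℝ))]
    rw [htdef]
    constructor
    · intro h
      calc (k:ℝ) * ε ≤ (k:ℝ) * (1/(k:ℝ) * ‖W ω‖) := mul_le_mul_of_nonneg_left h hkR.le
        _ = ‖W ω‖ := by field_simp
    · intro h
      calc ε = 1/(k:ℝ) * ((k:ℝ) * ε) := by field_simp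
        _ ≤ 1/(k:ℝ) * ‖W ω‖ := mul_le_mul_of_nonneg_left h (by positivity)
  -- Markov / Chernoff step
  set g : Ω → ℝ := fun ω => 2 * Real.exp (-(L * t)) * Real.cosh (L * ‖W ω‖) with hgdef
  have hcoshWmeas : Measurable (fun ω => Real.cosh (L * ‖W ω‖)) :=
    Real.continuous_cosh.measurable.comp (measurable_const.mul hWmeas.norm)
  have hgmeas : Measurable g := measurable_const.mul hcoshWmeas
  have hcoshW : Integrable (fun ω => Real.cosh (L * ‖W ω‖)) ℙ := by
    apply Integrable.mono' (integrable_const (Real.cosh (L * ((k:ℝ) * b))))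
      hcoshWmeas.aestronglyMeasurable
    filter_upwards [hWbd] with ω hω
    rw [Real.norm_eq_abs, abs_of_pos (Real.cosh_pos _)]
    exact cosh_mul_norm_le hL.le _ hω
  have hgint : Integrable g ℙ := hcoshW.const_mul _
  have hgnn : 0 ≤ᵐ[ℙ] g := by
    filter_upwards with ω
    have := (Real.cosh_pos (L * ‖W ω‖)).le
    positivity
  have hsub : {ω | t ≤ ‖W ω‖} ⊆ {ω | 1 ≤ ENNReal.ofReal (g ω)} := by
    intro ω hω
    simp only [Set.mem_setOf_eq] at hω ⊢
    apply ENNReal.one_le_ofReal.2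
    have e1 : Real.exp (L * t) ≤ 2 * Real.cosh (L * t) := by
      rw [Real.cosh_eq]
      have := (Real.exp_pos (-(L * t))).le
      linarith
    have e2 : Real.cosh (L * t) ≤ Real.cosh (L * ‖W ω‖) := by
      rw [Real.cosh_le_cosh, abs_of_pos (by positivity), abs_of_nonneg (by positivity)]
      exact mul_le_mul_of_nonneg_left hω hL.le
    have e3 : Real.exp (-(L * t)) * Real.exp (L * t) = 1 := by
      rw [← Real.exp_add]; simp
    have e4 : (0:ℝ) < Real.exp (-(L * t)) := Real.exp_pos _
    show (1:ℝ) ≤ 2 * Real.exp (-(L * t)) * Real.cosh (L * ‖W ω‖)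
    nlinarith [e1, e2, e3, e4]
  calc ℙ {ω | ε ≤ ‖(1 / (k : ℝ)) • (∑ i, X i ω) - m‖}
      = ℙ {ω | t ≤ ‖W ω‖} := by rw [hset]
    _ ≤ ℙ {ω | 1 ≤ ENNReal.ofReal (g ω)} := measure_mono hsub
    _ ≤ ∫⁻ ω, ENNReal.ofReal (g ω) ∂ℙ := by
        simpa using mul_meas_ge_le_lintegral₀ (hgmeas.ennreal_ofReal.aemeasurable) 1
    _ = ENNReal.ofReal (∫ ω, g ω ∂ℙ) := (ofReal_integral_eq_lintegral_ofReal hgint hgnn).symm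
    _ ≤ ENNReal.ofReal (2 * Real.exp (-(L * t)) * Real.cosh (L * b) ^ k) := by
        apply ENNReal.ofReal_le_ofReal
        have h7 : ∫ ω, g ω ∂ℙ
            = 2 * Real.exp (-(L * t)) * ∫ ω, Real.cosh (L * ‖W ω‖) ∂ℙ := by
          rw [hgdef, integral_const_mul]
        rw [h7]
        exact mul_le_mul_of_nonneg_left hkey (by positivity)
    _ ≤ ENNReal.ofReal (2 * Real.exp (-(L * t)) * Real.exp ((k:ℝ) * (L * b) ^ 2 / 2)) := by
        apply ENNReal.ofReal_le_ofReal
        apply mul_le_mul_of_nonneg_left _ (by positivity)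
        calc Real.cosh (L * b) ^ k ≤ Real.exp ((L * b) ^ 2 / 2) ^ k :=
              pow_le_pow_left₀ (Real.cosh_pos _).le (Real.cosh_le_exp_half_sq _) k
          _ = Real.exp ((k:ℝ) * ((L * b) ^ 2 / 2)) := by rw [← Real.exp_nat_mul]
          _ = Real.exp ((k:ℝ) * (L * b) ^ 2 / 2) := by ring_nf
    _ = ENNReal.ofReal (2 * Real.exp (-(k : ℝ) ^ ((1:ℝ) / q) / (8 * U ^ 2))) := by
        congr 1
        rw [mul_assoc, ← Real.exp_add, hexp]
    _ < ENNReal.ofReal (2 * Real.exp 2 * Real.exp (-(k : ℝ) ^ (1 / q) / (8 * U ^ 2))) := by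
        have hx := Real.exp_pos (-(k : ℝ) ^ ((1:ℝ) / q) / (8 * U ^ 2))
        have h8 : (1:ℝ) < Real.exp 2 := by nlinarith [Real.add_one_le_exp (2:ℝ)]
        have hpos : (0:ℝ) < 2 * Real.exp 2 * Real.exp (-(k : ℝ) ^ ((1:ℝ) / q) / (8 * U ^ 2)) := by
          have h9 := Real.exp_pos (2:ℝ)
          nlinarith
        rw [ENNReal.ofReal_lt_ofReal_iff hpos]
        nlinarith
end
end
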